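/- arXiv:2303.16279 — 3 statements merged into one kernel-verified Lean document; each statement's English description precedes it below -/
import Mathlib

section
/- Let f : ℝ^d → ℝ be convex and differentiable and satisfy the block-Lipschitz assumption with resulting constant L. Then for all x, y ∈ ℝ^d: f(y) − f(x) ≤ ⟨∇f(x), y − x⟩ + (L/2)‖y − x‖². -/
noncomputable section
open MeasureTheory Finset Set RealInnerProductSpace

abbrev Euc (d : ℕ) := EuclideanSpace ℝ (Fin d)

def blockMask {d m : ℕ} (blk : Fin d → Fin m) (j : Fin m) (z : Euc d) : Euc d :=
  (EuclideanSpace.equiv (Fin d) ℝ).symm fun i => if blk i = j then z i else 0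

def blockCombine {d m : ℕ} (blk : Fin d → Fin m) (j : ℕ) (x y : Euc d) : Euc d :=
  (EuclideanSpace.equiv (Fin d) ℝ).symm fun i => if (blk i : ℕ) + 1 ≤ j then x i else y i

def quadForm {d : ℕ} (Q : Matrix (Fin d) (Fin d) ℝ) (z : Euc d) : ℝ :=
  ∑ i, ∑ i', Q i i' * z i * z i'

def keepGE {d m : ℕ} (blk : Fin d → Fin m) (j : ℕ) (Q : Matrix (Fin d) (Fin d) ℝ) :
    Matrix (Fin d) (Fin d) ℝ :=
  Matrix.of fun i i' => if j ≤ (blk i : ℕ) + 1 ∧ j ≤ (blk i' : ℕ) + 1 then Q i i' else 0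

def Qtilde {d m : ℕ} (blk : Fin d → Fin m) (Q : Fin m → Matrix (Fin d) (Fin d) ℝ) :
    Matrix (Fin d) (Fin d) ℝ :=
  ∑ j : Fin m, (keepGE blk ((j : ℕ) + 1) (Q j) + keepGE blk ((j : ℕ) + 2) (Q j))

def specNorm {d : ℕ} (Q : Matrix (Fin d) (Fin d) ℝ) : ℝ :=
  ‖Matrix.toEuclideanCLM (𝕜 := ℝ) Q‖

def bigL {d m : ℕ} (blk : Fin d → Fin m) (Q : Fin m → Matrix (Fin d) (Fin d) ℝ) : ℝ :=
  Real.sqrt (2 * specNorm (Qtilde blk Q))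

def BlockLip {d m : ℕ} (blk : Fin d → Fin m) (f : Euc d → ℝ)
    (Q : Fin m → Matrix (Fin d) (Fin d) ℝ) : Prop :=
  ∀ (j : Fin m) (x y : Euc d),
    ‖blockMask blk j (gradient f x) - blockMask blk j (gradient f y)‖ ^ 2 ≤
      quadForm (Q j) (x - y)

def SubgradStrongConvex {d : ℕ} (γ : ℝ) (g : Euc d → ℝ) : Prop :=
  ∀ x y s : Euc d, (∀ z, g x + ⟪s, z - x⟫ ≤ g z) →
    g x + ⟪s, y - x⟫ + γ / 2 * ‖y - x‖ ^ 2 ≤ g y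

/-! ### Auxiliary definitions and lemmas -/

def maskGE {d m : ℕ} (blk : Fin d → Fin m) (j : ℕ) (z : Euc d) : Euc d :=
  (EuclideanSpace.equiv (Fin d) ℝ).symm fun i => if j ≤ (blk i : ℕ) + 1 then z i else 0

@[simp] lemma blockMask_apply {d m : ℕ} (blk : Fin d → Fin m) (j : Fin m) (z : Euc d) (i : Fin d) :
    blockMask blk j z i = if blk i = j then z i else 0 := rfl

@[simp] lemma maskGE_apply {d m : ℕ} (blk : Fin d → Fin m) (j : ℕ) (z : Euc d) (i : Fin d) :
    maskGE blk j z i = if j ≤ (blk i : ℕ) + 1 then z i else 0 := rfl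

@[simp] lemma keepGE_apply {d m : ℕ} (blk : Fin d → Fin m) (j : ℕ) (Q : Matrix (Fin d) (Fin d) ℝ)
    (i i' : Fin d) :
    keepGE blk j Q i i' = if j ≤ (blk i : ℕ) + 1 ∧ j ≤ (blk i' : ℕ) + 1 then Q i i' else 0 := rfl

@[simp] lemma blockCombine_apply {d m : ℕ} (blk : Fin d → Fin m) (j : ℕ) (x y : Euc d)
    (i : Fin d) : blockCombine blk j x y i = if (blk i : ℕ) + 1 ≤ j then x i else y i := rfl

lemma euc_ext {d : ℕ} {a b : Euc d} (h : ∀ i, a i = b i) : a = b := PiLp.ext h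

lemma quadForm_eq_dot {d : ℕ} (Q : Matrix (Fin d) (Fin d) ℝ) (z : Euc d) :
    quadForm Q z = dotProduct (fun i => z i) (Q.mulVec fun i => z i) := by
  unfold quadForm
  simp only [dotProduct, Matrix.mulVec, Finset.mul_sum]
  exact Finset.sum_congr rfl fun i _ => Finset.sum_congr rfl fun i' _ => by ring

lemma quadForm_nonneg {d : ℕ} {Q : Matrix (Fin d) (Fin d) ℝ} (hQ : Q.PosSemidef) (z : Euc d) :
    0 ≤ quadForm Q z := by
  rw [quadForm_eq_dot]
  have := hQ.dotProduct_mulVec_nonneg (fun i => z i)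
  simpa using this

lemma quadForm_segment {d : ℕ} (Q : Matrix (Fin d) (Fin d) ℝ) (u w : Euc d) (t : ℝ) :
    quadForm Q ((1-t) • u + t • w) =
      (1-t) * quadForm Q u + t * quadForm Q w - t*(1-t) * quadForm Q (u - w) := by
  unfold quadForm
  simp only [Finset.mul_sum, ← Finset.sum_sub_distrib, ← Finset.sum_add_distrib,
    PiLp.add_apply, PiLp.smul_apply, PiLp.sub_apply, smul_eq_mul]
  exact Finset.sum_congr rfl fun i _ => Finset.sum_congr rfl fun i' _ => by ring

lemma quadForm_maskGE {d m : ℕ} (blk : Fin d → Fin m) (j : ℕ) (Q : Matrix (Fin d) (Fin d) ℝ)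
    (z : Euc d) : quadForm Q (maskGE blk j z) = quadForm (keepGE blk j Q) z := by
  unfold quadForm
  refine Finset.sum_congr rfl fun i _ => Finset.sum_congr rfl fun i' _ => ?_
  simp only [maskGE_apply, keepGE_apply]
  by_cases h1 : j ≤ (blk i : ℕ) + 1 <;> by_cases h2 : j ≤ (blk i' : ℕ) + 1 <;>
    simp [h1, h2]

lemma inner_blockMask {d m : ℕ} (blk : Fin d → Fin m) (j : Fin m) (a w : Euc d) :
    ⟪a, blockMask blk j w⟫ = ⟪blockMask blk j a, blockMask blk j w⟫ := by
  simp only [PiLp.inner_apply, RCLike.inner_apply, conj_trivial, blockMask_apply]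
  refine Finset.sum_congr rfl fun i _ => ?_
  by_cases h : blk i = j <;> simp [h]

lemma blockMask_sub {d m : ℕ} (blk : Fin d → Fin m) (j : Fin m) (a b : Euc d) :
    blockMask blk j (a - b) = blockMask blk j a - blockMask blk j b := by
  apply euc_ext
  intro i
  simp only [PiLp.sub_apply, blockMask_apply]
  by_cases h : blk i = j <;> simp [h]

lemma sum_inner_blockMask {d m : ℕ} (blk : Fin d → Fin m) (g w : Euc d) :
    ∑ j : Fin m, ⟪g, blockMask blk j w⟫ = ⟪g, w⟫ := by
  simp only [PiLp.inner_apply, RCLike.inner_apply, conj_trivial, blockMask_apply]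
  rw [Finset.sum_comm]
  refine Finset.sum_congr rfl fun i _ => ?_
  rw [← Finset.sum_mul, Finset.sum_ite_eq]
  simp

lemma sum_normsq_blockMask {d m : ℕ} (blk : Fin d → Fin m) (w : Euc d) :
    ∑ j : Fin m, ‖blockMask blk j w‖^2 = ‖w‖^2 := by
  have e : ∀ v : Euc d, ‖v‖^2 = ∑ i, (v i)^2 := by
    intro v
    rw [EuclideanSpace.norm_eq, Real.sq_sqrt (by positivity)]
    exact Finset.sum_congr rfl fun i _ => by rw [Real.norm_eq_abs, sq_abs]
  simp only [e, blockMask_apply]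
  rw [Finset.sum_comm]
  refine Finset.sum_congr rfl fun i _ => ?_
  rw [Finset.sum_eq_single (blk i)]
  · simp
  · intro j _ hj; simp [Ne.symm hj]
  · simp

lemma quadForm_le_specNorm {d : ℕ} (Q : Matrix (Fin d) (Fin d) ℝ) (z : Euc d) :
    quadForm Q z ≤ specNorm Q * ‖z‖^2 := by
  have key : quadForm Q z = ⟪z, (Matrix.toEuclideanCLM (𝕜 := ℝ) Q) z⟫ := by
    simp only [PiLp.inner_apply, RCLike.inner_apply, conj_trivial]
    unfold quadForm
    refine Finset.sum_congr rfl fun i _ => ?_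
    have h0 : (Matrix.toEuclideanCLM (𝕜 := ℝ) Q) z i = Q.mulVec (fun k => z k) i := rfl
    rw [h0]
    simp only [Matrix.mulVec, dotProduct, Finset.mul_sum, Finset.sum_mul]
    exact Finset.sum_congr rfl fun i' _ => by ring
  rw [key]
  calc ⟪z, (Matrix.toEuclideanCLM (𝕜 := ℝ) Q) z⟫ ≤ ‖z‖ * ‖(Matrix.toEuclideanCLM (𝕜 := ℝ) Q) z‖ :=
        real_inner_le_norm _ _
    _ ≤ ‖z‖ * (specNorm Q * ‖z‖) :=
        mul_le_mul_of_nonneg_left (ContinuousLinearMap.le_opNorm _ _) (norm_nonneg _)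
    _ = specNorm Q * ‖z‖^2 := by ring

lemma quadForm_add {d : ℕ} (A B : Matrix (Fin d) (Fin d) ℝ) (z : Euc d) :
    quadForm (A + B) z = quadForm A z + quadForm B z := by
  unfold quadForm
  simp only [Matrix.add_apply, add_mul, Finset.sum_add_distrib]

lemma quadForm_sum {d : ℕ} {ι : Type*} (s : Finset ι) (A : ι → Matrix (Fin d) (Fin d) ℝ)
    (z : Euc d) : quadForm (∑ j ∈ s, A j) z = ∑ j ∈ s, quadForm (A j) z := by
  classical
  induction s using Finset.induction_on with
  | empty => simp [quadForm]
  | insert j s hj ih =>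
      rw [Finset.sum_insert hj, Finset.sum_insert hj, quadForm_add, ih]

lemma quadForm_Qtilde {d m : ℕ} (blk : Fin d → Fin m) (Q : Fin m → Matrix (Fin d) (Fin d) ℝ)
    (z : Euc d) :
    quadForm (Qtilde blk Q) z =
      ∑ j : Fin m, (quadForm (keepGE blk ((j:ℕ)+1) (Q j)) z
        + quadForm (keepGE blk ((j:ℕ)+2) (Q j)) z) := by
  rw [Qtilde, quadForm_sum]
  exact Finset.sum_congr rfl fun j _ => quadForm_add _ _ _

lemma integral_linear (α β : ℝ) : ∫ t in (0:ℝ)..1, (α + β * t) = α + β / 2 := by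
  have h1 : IntervalIntegrable (fun _ : ℝ => α) volume 0 1 := intervalIntegrable_const
  have h2 : IntervalIntegrable (fun t : ℝ => β * t) volume 0 1 :=
    (continuous_const.mul continuous_id).intervalIntegrable _ _
  rw [intervalIntegral.integral_add h1 h2, intervalIntegral.integral_const,
    intervalIntegral.integral_const_mul, integral_id]
  norm_num
  ring

lemma sqrt_le_linear {u c : ℝ} (hu : 0 ≤ u) (hc : 0 < c) :
    Real.sqrt u ≤ (u + c) / (2 * Real.sqrt c) := by
  rw [le_div_iff₀ (by positivity)]
  nlinarith [Real.sq_sqrt hu, Real.sq_sqrt hc.le, sq_nonneg (Real.sqrt u - Real.sqrt c),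
    Real.sqrt_nonneg u, Real.sqrt_nonneg c, Real.sqrt_pos.mpr hc]

lemma sqrt_half_eq (s : ℝ) (hs : 0 ≤ s) : Real.sqrt (2 * s) / 2 = Real.sqrt (s / 2) := by
  rw [show s / 2 = (2*s) / 4 by ring, Real.sqrt_div (by positivity) 4,
    show (4:ℝ)=2^2 by norm_num, Real.sqrt_sq (by norm_num : (0:ℝ) ≤ 2)]

lemma abs_apply_le_norm {d : ℕ} (z : Euc d) (i : Fin d) : |z i| ≤ ‖z‖ := by
  rw [← Real.sqrt_sq_eq_abs, EuclideanSpace.norm_eq]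
  apply Real.sqrt_le_sqrt
  have : (z i)^2 = ‖z i‖^2 := by rw [Real.norm_eq_abs, sq_abs]
  rw [this]
  exact Finset.single_le_sum (f := fun k => ‖z k‖^2) (fun k _ => by positivity)
    (Finset.mem_univ i)

lemma quadForm_le_crude {d : ℕ} (Q : Matrix (Fin d) (Fin d) ℝ) (z : Euc d) :
    quadForm Q z ≤ (∑ i, ∑ i', |Q i i'|) * ‖z‖^2 := by
  unfold quadForm
  rw [Finset.sum_mul]
  refine Finset.sum_le_sum fun i _ => ?_
  rw [Finset.sum_mul]
  refine Finset.sum_le_sum fun i' _ => ?_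
  calc Q i i' * z i * z i' ≤ |Q i i' * z i * z i'| := le_abs_self _
    _ = |Q i i'| * |z i| * |z i'| := by rw [abs_mul, abs_mul]
    _ ≤ |Q i i'| * ‖z‖ * ‖z‖ := by
        have h1 := abs_apply_le_norm z i
        have h2 := abs_apply_le_norm z i'
        gcongr <;> first | exact abs_nonneg _ | exact h1 | exact h2
    _ = |Q i i'| * ‖z‖^2 := by ring

lemma grad_continuous {d m : ℕ} (blk : Fin d → Fin m) (f : Euc d → ℝ)
    (Q : Fin m → Matrix (Fin d) (Fin d) ℝ) (hlip : BlockLip blk f Q) :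
    Continuous (gradient f) := by
  set C : ℝ := Real.sqrt (∑ j, ∑ i, ∑ i', |Q j i i'|) with hC
  have hC0 : 0 ≤ C := Real.sqrt_nonneg _
  have key : ∀ x y : Euc d, ‖gradient f x - gradient f y‖ ≤ C * ‖x - y‖ := by
    intro x y
    have h1 : ‖gradient f x - gradient f y‖^2
        = ∑ j : Fin m, ‖blockMask blk j (gradient f x) - blockMask blk j (gradient f y)‖^2 := by
      rw [← sum_normsq_blockMask blk (gradient f x - gradient f y)]
      exact Finset.sum_congr rfl fun j _ => by rw [blockMask_sub]
    have h2 : ‖gradient f x - gradient f y‖^2 ≤ C^2 * ‖x - y‖^2 := by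
      rw [h1, Real.sq_sqrt (by positivity), Finset.sum_mul]
      refine Finset.sum_le_sum fun j _ => ?_
      exact le_trans (hlip j x y) (quadForm_le_crude _ _)
    calc ‖gradient f x - gradient f y‖
        = Real.sqrt (‖gradient f x - gradient f y‖^2) := (Real.sqrt_sq (norm_nonneg _)).symm
      _ ≤ Real.sqrt (C^2 * ‖x - y‖^2) := Real.sqrt_le_sqrt h2
      _ = C * ‖x - y‖ := by
          rw [Real.sqrt_mul (by positivity), Real.sqrt_sq hC0, Real.sqrt_sq (norm_nonneg _)]
  have : LipschitzWith C.toNNReal (gradient f) := by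
    apply LipschitzWith.of_dist_le_mul
    intro x y
    rw [dist_eq_norm, dist_eq_norm, Real.coe_toNNReal C hC0]
    exact key x y
  exact this.continuous

lemma block_step {d m : ℕ} (blk : Fin d → Fin m) (f : Euc d → ℝ)
    (hdiff : Differentiable ℝ f) (hgc : Continuous (gradient f))
    (Qj : Matrix (Fin d) (Fin d) ℝ) (hQ : Qj.PosSemidef) (j : Fin m)
    (hlipj : ∀ u v : Euc d,
      ‖blockMask blk j (gradient f u) - blockMask blk j (gradient f v)‖ ^ 2 ≤ quadForm Qj (u - v))
    (x h z : Euc d) (hz : z - x = maskGE blk ((j:ℕ)+2) h) :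
    f (z + blockMask blk j h) - f z ≤ ⟪gradient f x, blockMask blk j h⟫
      + ‖blockMask blk j h‖ * Real.sqrt ((quadForm (keepGE blk ((j:ℕ)+1) Qj) h
          + quadForm (keepGE blk ((j:ℕ)+2) Qj) h) / 2) := by
  set v : Euc d := blockMask blk j h with hv
  set a : ℝ := quadForm (keepGE blk ((j:ℕ)+1) Qj) h with ha
  set b : ℝ := quadForm (keepGE blk ((j:ℕ)+2) Qj) h with hb
  have ha0 : 0 ≤ a := by
    rw [ha, ← quadForm_maskGE]; exact quadForm_nonneg hQ _
  have hb0 : 0 ≤ b := by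
    rw [hb, ← quadForm_maskGE]; exact quadForm_nonneg hQ _
  -- the mask decomposition :  maskGE (j+2) h + v = maskGE (j+1) h
  have hmask : maskGE blk ((j:ℕ)+2) h + v = maskGE blk ((j:ℕ)+1) h := by
    apply euc_ext
    intro i
    simp only [PiLp.add_apply, maskGE_apply, hv, blockMask_apply]
    rcases lt_trichotomy ((blk i : ℕ)) (j : ℕ) with hlt | heq | hgt
    · have h1 : ¬ ((j:ℕ)+2 ≤ (blk i:ℕ)+1) := by omega
      have h2 : ¬ ((j:ℕ)+1 ≤ (blk i:ℕ)+1) := by omega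
      have h3 : blk i ≠ j := fun e => by simp [e] at hlt
      simp [h1, h2, h3]
    · have h1 : ¬ ((j:ℕ)+2 ≤ (blk i:ℕ)+1) := by omega
      have h2 : ((j:ℕ)+1 ≤ (blk i:ℕ)+1) := by omega
      have h3 : blk i = j := Fin.ext heq
      simp [h1, h2, h3]
    · have h1 : ((j:ℕ)+2 ≤ (blk i:ℕ)+1) := by omega
      have h2 : ((j:ℕ)+1 ≤ (blk i:ℕ)+1) := by omega
      have h3 : blk i ≠ j := fun e => by simp [e] at hgt
      simp [h1, h2, h3]
  -- the curve
  set c : ℝ → Euc d := fun t => z + t • v with hc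
  have hcderiv : ∀ t : ℝ, HasDerivAt c v t := by
    intro t
    have h1 : HasDerivAt (fun s : ℝ => s • v) ((1:ℝ) • v) t := (hasDerivAt_id t).smul_const v
    exact (by simpa using h1 : HasDerivAt (fun s : ℝ => s • v) v t).const_add z
  have hc_cont : Continuous c := by
    exact continuous_const.add (continuous_id.smul continuous_const)
  have hderiv : ∀ t ∈ Set.uIcc (0:ℝ) 1,
      HasDerivAt (fun s => f (c s)) ⟪gradient f (c t), v⟫ t := by
    intro t _
    have h2 := (hdiff (c t)).hasGradientAt.hasFDerivAt
    have h3 := h2.comp_hasDerivAt t (hcderiv t)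
    simpa [InnerProductSpace.toDual_apply_apply, Function.comp_def] using h3
  have hint : IntervalIntegrable (fun t => ⟪gradient f (c t), v⟫) volume 0 1 := by
    exact (Continuous.inner (hgc.comp hc_cont) continuous_const).intervalIntegrable _ _
  have heq1 : ∫ t in (0:ℝ)..1, ⟪gradient f (c t), v⟫ = f (z + v) - f z := by
    have := intervalIntegral.integral_eq_sub_of_hasDerivAt hderiv hint
    rw [this]
    simp [hc]
  -- pointwise bound
  have hptw : ∀ t ∈ Set.Icc (0:ℝ) 1,
      ⟪gradient f (c t), v⟫ ≤ ⟪gradient f x, v⟫ + ‖v‖ * Real.sqrt ((1-t)*b + t*a) := by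
    intro t ht
    have hsplit : ⟪gradient f (c t), v⟫
        = ⟪gradient f x, v⟫ + ⟪gradient f (c t) - gradient f x, v⟫ := by
      rw [← inner_add_left, add_sub_cancel]
    rw [hsplit]
    have hct : c t - x = (1-t) • (maskGE blk ((j:ℕ)+2) h) + t • (maskGE blk ((j:ℕ)+1) h) := by
      rw [← hmask, ← hz]
      simp only [hc]
      module
    have hquad : quadForm Qj (c t - x) ≤ (1-t)*b + t*a := by
      rw [hct, quadForm_segment]
      have h5 : quadForm Qj (maskGE blk ((j:ℕ)+2) h) = b := by rw [hb, quadForm_maskGE]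
      have h6 : quadForm Qj (maskGE blk ((j:ℕ)+1) h) = a := by rw [ha, quadForm_maskGE]
      have h7 : 0 ≤ quadForm Qj (maskGE blk ((j:ℕ)+2) h - maskGE blk ((j:ℕ)+1) h) :=
        quadForm_nonneg hQ _
      have h8 : 0 ≤ t := ht.1
      have h9 : t ≤ 1 := ht.2
      nlinarith [h7, mul_nonneg (mul_nonneg h8 (by linarith : (0:ℝ) ≤ 1 - t)) h7]
    have hbound : ⟪gradient f (c t) - gradient f x, v⟫ ≤ ‖v‖ * Real.sqrt ((1-t)*b + t*a) := by
      have e1 : ⟪gradient f (c t) - gradient f x, v⟫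
          = ⟪blockMask blk j (gradient f (c t)) - blockMask blk j (gradient f x), v⟫ := by
        rw [hv, inner_blockMask, blockMask_sub]
      rw [e1]
      calc ⟪blockMask blk j (gradient f (c t)) - blockMask blk j (gradient f x), v⟫
          ≤ ‖blockMask blk j (gradient f (c t)) - blockMask blk j (gradient f x)‖ * ‖v‖ :=
            real_inner_le_norm _ _
        _ ≤ Real.sqrt ((1-t)*b + t*a) * ‖v‖ := by
            apply mul_le_mul_of_nonneg_right _ (norm_nonneg _)
            have h10 := hlipj (c t) x
            calc ‖blockMask blk j (gradient f (c t)) - blockMask blk j (gradient f x)‖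
                = Real.sqrt (‖blockMask blk j (gradient f (c t))
                    - blockMask blk j (gradient f x)‖^2) := (Real.sqrt_sq (norm_nonneg _)).symm
              _ ≤ Real.sqrt ((1-t)*b + t*a) :=
                  Real.sqrt_le_sqrt (le_trans h10 hquad)
        _ = ‖v‖ * Real.sqrt ((1-t)*b + t*a) := mul_comm _ _
    linarith [hbound]
  -- now integrate
  by_cases hab : a + b = 0
  · have haz : a = 0 := by linarith
    have hbz : b = 0 := by linarith
    have hle : ∫ t in (0:ℝ)..1, ⟪gradient f (c t), v⟫
        ≤ ∫ _t in (0:ℝ)..1, ⟪gradient f x, v⟫ := by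
      apply intervalIntegral.integral_mono_on zero_le_one hint intervalIntegrable_const
      intro t ht
      have := hptw t ht
      simpa [haz, hbz] using this
    rw [heq1] at hle
    simp only [intervalIntegral.integral_const, smul_eq_mul, sub_zero, one_mul] at hle
    have : Real.sqrt ((a + b)/2) = 0 := by rw [hab]; simp
    rw [this]
    simpa using hle
  · have hcpos : (0:ℝ) < (a+b)/2 := by
      rcases lt_or_eq_of_le (by linarith : (0:ℝ) ≤ a + b) with h' | h'
      · linarith
      · exact absurd h'.symm hab
    set cst : ℝ := (a+b)/2 with hcst
    have hss : Real.sqrt cst * Real.sqrt cst = cst := Real.mul_self_sqrt hcpos.le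
    have hsne : Real.sqrt cst ≠ 0 := by positivity
    set α : ℝ := ⟪gradient f x, v⟫ + ‖v‖*((b+cst)/(2*Real.sqrt cst)) with hα
    set β : ℝ := ‖v‖*((a-b)/(2*Real.sqrt cst)) with hβ
    have hupper : ∀ t ∈ Set.Icc (0:ℝ) 1, ⟪gradient f (c t), v⟫ ≤ α + β * t := by
      intro t ht
      have h11 := hptw t ht
      have h12 : (0:ℝ) ≤ (1-t)*b + t*a :=
        add_nonneg (mul_nonneg (by linarith [ht.2]) hb0) (mul_nonneg ht.1 ha0)
      have h13 : Real.sqrt ((1-t)*b + t*a) ≤ ((1-t)*b + t*a + cst)/(2*Real.sqrt cst) :=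
        sqrt_le_linear h12 hcpos
      have h14 : ‖v‖ * Real.sqrt ((1-t)*b + t*a)
          ≤ ‖v‖ * (((1-t)*b + t*a + cst)/(2*Real.sqrt cst)) :=
        mul_le_mul_of_nonneg_left h13 (norm_nonneg _)
      have h15 : ‖v‖ * (((1-t)*b + t*a + cst)/(2*Real.sqrt cst)) =
          ‖v‖*((b+cst)/(2*Real.sqrt cst)) + ‖v‖*((a-b)/(2*Real.sqrt cst)) * t := by
        field_simp
        ring
      rw [h15] at h14
      rw [hα, hβ]
      linarith
    have hintu : IntervalIntegrable (fun t => α + β * t) volume 0 1 :=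
      (continuous_const.add (continuous_const.mul continuous_id)).intervalIntegrable _ _
    have hle := intervalIntegral.integral_mono_on zero_le_one hint hintu hupper
    rw [heq1, integral_linear] at hle
    have hfinal : α + β / 2 = ⟪gradient f x, v⟫ + ‖v‖ * Real.sqrt cst := by
      have h2c : a + b = 2 * cst := by rw [hcst]; ring
      have hsum : (b+cst)/(2*Real.sqrt cst) + (a-b)/(2*Real.sqrt cst)/2 = Real.sqrt cst := by
        rw [div_div, show (2*Real.sqrt cst)*2 = 4*Real.sqrt cst by ring,
          div_add_div _ _ (by simpa using hsne) (by simpa using hsne),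
          div_eq_iff (by simp [hsne])]
        linear_combination (2*Real.sqrt cst)*h2c - 8*Real.sqrt cst*hss
      rw [hα, hβ]
      calc (⟪gradient f x, v⟫ + ‖v‖*((b+cst)/(2*Real.sqrt cst)))
            + ‖v‖*((a-b)/(2*Real.sqrt cst)) / 2
          = ⟪gradient f x, v⟫
            + ‖v‖ * ((b+cst)/(2*Real.sqrt cst) + (a-b)/(2*Real.sqrt cst)/2) := by ring
        _ = ⟪gradient f x, v⟫ + ‖v‖ * Real.sqrt cst := by rw [hsum]
    rw [hfinal] at hle
    exact hle

theorem stmt0 {d m : ℕ} (blk : Fin d → Fin m) (hmono : Monotone blk)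
    (hsurj : Function.Surjective blk)
    (f : Euc d → ℝ) (hconv : ConvexOn ℝ Set.univ f) (hdiff : Differentiable ℝ f)
    (Q : Fin m → Matrix (Fin d) (Fin d) ℝ) (hpsd : ∀ j, (Q j).PosSemidef)
    (hlip : BlockLip blk f Q) :
    ∀ x y : Euc d,
      f y - f x ≤ ⟪gradient f x, y - x⟫ + bigL blk Q / 2 * ‖y - x‖ ^ 2 := by
  intro x y
  have hgc : Continuous (gradient f) := grad_continuous blk f Q hlip
  set hh : Euc d := y - x with hhh
  set zc : ℕ → Euc d := fun j => blockCombine blk j x y with hzc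
  set g : Euc d := gradient f x with hg
  set a : Fin m → ℝ := fun j => quadForm (keepGE blk ((j:ℕ)+1) (Q j)) hh with haa
  set b : Fin m → ℝ := fun j => quadForm (keepGE blk ((j:ℕ)+2) (Q j)) hh with hbb
  have ha0 : ∀ j, 0 ≤ a j := fun j => by
    rw [haa]; dsimp only; rw [← quadForm_maskGE]; exact quadForm_nonneg (hpsd j) _
  have hb0 : ∀ j, 0 ≤ b j := fun j => by
    rw [hbb]; dsimp only; rw [← quadForm_maskGE]; exact quadForm_nonneg (hpsd j) _
  have hz0 : zc 0 = y := euc_ext fun i => by simp [hzc]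
  have hzm : zc m = x := euc_ext fun i => by
    simp [hzc, Nat.succ_le_of_lt (blk i).isLt]
  have hstep : ∀ j : Fin m, zc (j:ℕ) = zc ((j:ℕ)+1) + blockMask blk j hh := by
    intro j
    apply euc_ext
    intro i
    simp only [hzc, PiLp.add_apply, blockCombine_apply, blockMask_apply, hhh, PiLp.sub_apply]
    rcases lt_trichotomy ((blk i : ℕ)) (j : ℕ) with hlt | heq | hgt
    · have h1 : (blk i:ℕ)+1 ≤ (j:ℕ) := by omega
      have h2 : (blk i:ℕ)+1 ≤ (j:ℕ)+1 := by omega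
      have h3 : blk i ≠ j := fun e => by simp [e] at hlt
      simp [h1, h2, h3]
    · have h1 : ¬ ((blk i:ℕ)+1 ≤ (j:ℕ)) := by omega
      have h2 : (blk i:ℕ)+1 ≤ (j:ℕ)+1 := by omega
      have h3 : blk i = j := Fin.ext heq
      simp [h1, h2, h3]
    · have h1 : ¬ ((blk i:ℕ)+1 ≤ (j:ℕ)) := by omega
      have h2 : ¬ ((blk i:ℕ)+1 ≤ (j:ℕ)+1) := by omega
      have h3 : blk i ≠ j := fun e => by simp [e] at hgt
      simp [h1, h2, h3]
  have hsub : ∀ j : Fin m, zc ((j:ℕ)+1) - x = maskGE blk ((j:ℕ)+2) hh := by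
    intro j
    apply euc_ext
    intro i
    simp only [hzc, PiLp.sub_apply, blockCombine_apply, maskGE_apply, hhh]
    by_cases h1 : (blk i:ℕ)+1 ≤ (j:ℕ)+1
    · have h2 : ¬ ((j:ℕ)+2 ≤ (blk i:ℕ)+1) := by omega
      simp [h1, h2]
    · have h2 : (j:ℕ)+2 ≤ (blk i:ℕ)+1 := by omega
      simp [h1, h2]
  have htel : f y - f x = ∑ j : Fin m, (f (zc (j:ℕ)) - f (zc ((j:ℕ)+1))) := by
    rw [show ∑ j : Fin m, (f (zc (j:ℕ)) - f (zc ((j:ℕ)+1)))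
        = ∑ j ∈ Finset.range m, (f (zc j) - f (zc (j+1))) from
      Fin.sum_univ_eq_sum_range (fun j => f (zc j) - f (zc (j+1))) m]
    rw [Finset.sum_range_sub' (fun j => f (zc j)) m, hz0, hzm]
  have hblock : ∀ j : Fin m, f (zc (j:ℕ)) - f (zc ((j:ℕ)+1))
      ≤ ⟪g, blockMask blk j hh⟫ + ‖blockMask blk j hh‖ * Real.sqrt ((a j + b j)/2) := by
    intro j
    have hbs := block_step blk f hdiff hgc (Q j) (hpsd j) j (hlip j) x hh (zc ((j:ℕ)+1)) (hsub j)
    rw [← hstep j] at hbs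
    exact hbs
  have hsum1 : f y - f x ≤ ⟪g, hh⟫
      + ∑ j : Fin m, ‖blockMask blk j hh‖ * Real.sqrt ((a j + b j)/2) := by
    rw [htel, ← sum_inner_blockMask blk g hh, ← Finset.sum_add_distrib]
    exact Finset.sum_le_sum fun j _ => hblock j
  -- Cauchy-Schwarz across blocks
  set S : ℝ := ∑ j : Fin m, ‖blockMask blk j hh‖ * Real.sqrt ((a j + b j)/2) with hS
  have hS0 : 0 ≤ S :=
    Finset.sum_nonneg fun j _ => mul_nonneg (norm_nonneg _) (Real.sqrt_nonneg _)
  have hcs : S^2 ≤ ‖hh‖^2 * (quadForm (Qtilde blk Q) hh / 2) := by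
    have h1 := Finset.sum_mul_sq_le_sq_mul_sq Finset.univ
      (fun j : Fin m => ‖blockMask blk j hh‖) (fun j => Real.sqrt ((a j + b j)/2))
    have h2 : ∑ j : Fin m, (Real.sqrt ((a j + b j)/2))^2
        = quadForm (Qtilde blk Q) hh / 2 := by
      rw [quadForm_Qtilde, Finset.sum_div]
      refine Finset.sum_congr rfl fun j _ => ?_
      rw [Real.sq_sqrt (by have h3 := ha0 j; have h4 := hb0 j; positivity)]
    rw [sum_normsq_blockMask blk hh] at h1
    rw [← h2]
    exact h1
  have hspec0 : 0 ≤ specNorm (Qtilde blk Q) := norm_nonneg _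
  have hqle : quadForm (Qtilde blk Q) hh ≤ specNorm (Qtilde blk Q) * ‖hh‖^2 :=
    quadForm_le_specNorm _ _
  have hSle : S ≤ Real.sqrt (specNorm (Qtilde blk Q) / 2) * ‖hh‖^2 := by
    have h3 : S^2 ≤ specNorm (Qtilde blk Q) / 2 * (‖hh‖^2)^2 := by
      calc S^2 ≤ ‖hh‖^2 * (quadForm (Qtilde blk Q) hh / 2) := hcs
        _ ≤ ‖hh‖^2 * (specNorm (Qtilde blk Q) * ‖hh‖^2 / 2) := by
            gcongr
        _ = specNorm (Qtilde blk Q) / 2 * (‖hh‖^2)^2 := by ring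
    calc S = Real.sqrt (S^2) := (Real.sqrt_sq hS0).symm
      _ ≤ Real.sqrt (specNorm (Qtilde blk Q) / 2 * (‖hh‖^2)^2) := Real.sqrt_le_sqrt h3
      _ = Real.sqrt (specNorm (Qtilde blk Q) / 2) * ‖hh‖^2 := by
          rw [Real.sqrt_mul (by positivity), Real.sqrt_sq (by positivity)]
  have hLval : bigL blk Q / 2 = Real.sqrt (specNorm (Qtilde blk Q) / 2) := by
    rw [bigL, sqrt_half_eq _ hspec0]
  calc f y - f x ≤ ⟪g, hh⟫ + S := hsum1
    _ ≤ ⟪g, hh⟫ + Real.sqrt (specNorm (Qtilde blk Q) / 2) * ‖hh‖^2 := by linarith [hSle]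
    _ = ⟪gradient f x, y - x⟫ + bigL blk Q / 2 * ‖y - x‖ ^ 2 := by rw [hLval]
end
end

section
/- With the estimate-sequence construction below, for every u ∈ ℝ^d, every sequence of vectors {q_i}_{i≥1} ⊆ ℝ^d, and every k ≥ 1: A_k (f̄(y_k) − f̄(u)) ≤ Σ_{i=1}^k E_i(u) + ½‖u − x_0‖² − ((1 + A_k γ)/2)‖u − v_k‖², where E_i(u) := A_i (f(y_i) − f(x_i)) − A_{i−1}(f(y_{i−1}) − f(x_i)) − a_i ⟨q_i, v_i − x_i⟩ + a_i ⟨∇f(x_i) − q_i, x_i − u⟩ − ((1 + A_{i−1}γ)/2)‖v_i − v_{i−1}‖². -/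
noncomputable section
open MeasureTheory Finset Set RealInnerProductSpace Topology Filter

private lemma aux_t_limit (P Q C : ℝ) (hC : 0 ≤ C)
    (h : ∀ t : ℝ, 0 < t → t ≤ 1 → P ≤ Q + t * C) : P ≤ Q := by
  by_contra hc
  push_neg at hc
  have hden : 0 < 2 * C + 2 := by linarith
  have ht1 : 0 < (P - Q) / (2 * C + 2) := div_pos (by linarith) hden
  set t := min 1 ((P - Q) / (2 * C + 2)) with htdef
  have ht0 : 0 < t := lt_min one_pos ht1
  have htle : t ≤ 1 := min_le_left _ _
  have h2 := h t ht0 htle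
  have h3 : t ≤ (P - Q) / (2 * C + 2) := min_le_right _ _
  have h4 : t * C ≤ (P - Q) / (2 * C + 2) * C := mul_le_mul_of_nonneg_right h3 hC
  have h5 : (P - Q) / (2 * C + 2) * C < P - Q := by
    rw [div_mul_eq_mul_div, div_lt_iff₀ hden]
    nlinarith
  linarith

private lemma quad_expand {d : ℕ} (c w z : Euc d) :
    ‖z - c‖ ^ 2 / 2 = ‖w - c‖ ^ 2 / 2 + ⟪w - c, z - w⟫ + ‖z - w‖ ^ 2 / 2 := by
  have h : z - c = (w - c) + (z - w) := by abel
  rw [h, norm_add_sq_real]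
  rw [real_inner_comm]
  ring

private lemma grad_support {d : ℕ} {f : Euc d → ℝ} (hconv : ConvexOn ℝ Set.univ f)
    (hdiff : Differentiable ℝ f) (x z : Euc d) :
    f x + ⟪gradient f x, z - x⟫ ≤ f z := by
  set w := z - x with hw
  set φ : ℝ → ℝ := fun t => f (x + t • w) with hφ
  have hderiv : HasDerivAt φ (fderiv ℝ f x w) 0 := by
    have hc : HasDerivAt (fun t : ℝ => x + t • w) w 0 := by
      simpa using ((hasDerivAt_id (0 : ℝ)).smul_const w).const_add x
    have h2 := (hdiff (x + (0 : ℝ) • w)).hasFDerivAt.comp_hasDerivAt 0 hc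
    exact (by simpa using h2 : HasDerivAt (f ∘ fun t : ℝ => x + t • w) (fderiv ℝ f x w) 0)
  have key : fderiv ℝ f x w ≤ φ 1 - φ 0 := by
    have hmono : 𝓝[>] (0:ℝ) ≤ 𝓝[≠] (0:ℝ) :=
      nhdsWithin_mono 0 (fun t ht => by simpa using ne_of_gt ht)
    have htend : Filter.Tendsto (slope φ 0) (𝓝[>] (0:ℝ)) (𝓝 (fderiv ℝ f x w)) :=
      (hasDerivAt_iff_tendsto_slope.mp hderiv).mono_left hmono
    refine le_of_tendsto htend ?_
    filter_upwards [Ioo_mem_nhdsGT_of_mem (Set.left_mem_Ico.mpr one_pos)] with t ht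
    have h0t : 0 < t := ht.1
    have ht1 : t < 1 := ht.2
    have hcv := hconv.2 (Set.mem_univ x) (Set.mem_univ z)
      (by linarith : (0:ℝ) ≤ 1 - t) h0t.le (by ring)
    have hpt : (1 - t) • x + t • z = x + t • w := by rw [hw]; module
    rw [hpt] at hcv
    simp only [smul_eq_mul] at hcv
    have hslope : slope φ 0 t = (φ t - φ 0) / t := by
      rw [slope_def_field]; ring_nf
    rw [hslope, div_le_iff₀ h0t]
    have hφ0 : φ 0 = f x := by simp [hφ]
    have hφt : φ t = f (x + t • w) := rfl
    have hφ1 : φ 1 = f z := by simp [hφ, hw]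
    rw [hφt, hφ0, hφ1]
    linarith [hcv]
  have hg : ⟪gradient f x, w⟫ = fderiv ℝ f x w := by
    simp only [gradient]
    exact InnerProductSpace.toDual_symm_apply
  have hφ1 : φ 1 = f z := by simp [hφ, hw]
  have hφ0 : φ 0 = f x := by simp [hφ]
  rw [hg]
  linarith [key, hφ1.le, hφ0.le, hφ1.ge, hφ0.ge]

set_option maxHeartbeats 2000000 in
theorem stmt5 {d : ℕ} (f g : Euc d → ℝ) (γ : ℝ) (hγ : 0 ≤ γ)
    (hfconv : ConvexOn ℝ Set.univ f) (hfdiff : Differentiable ℝ f)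
    (hgconv : ConvexOn ℝ Set.univ g) (hgsc : SubgradStrongConvex γ g)
    (a A : ℕ → ℝ) (ha0 : a 0 = 0) (hA0 : A 0 = 0)
    (hapos : ∀ k, 1 ≤ k → 0 < a k)
    (hA : ∀ k, 1 ≤ k → A k = A (k - 1) + a k)
    (x q v y : ℕ → Euc d)
    (hv0 : v 0 = x 0) (hy0 : y 0 = x 0)
    (hv : ∀ k, 1 ≤ k → IsMinOn
      (fun u => ‖u - x 0‖ ^ 2 / 2 +
        ∑ i ∈ Finset.Icc 1 k, a i * (f (x i) + ⟪q i, u - x i⟫ + g u))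
      Set.univ (v k))
    (hy : ∀ k, 1 ≤ k → y k = (A k)⁻¹ • ∑ i ∈ Finset.Icc 1 k, a i • v i) :
    ∀ u : Euc d, ∀ k, 1 ≤ k →
      A k * ((f (y k) + g (y k)) - (f u + g u)) ≤
        (∑ i ∈ Finset.Icc 1 k,
          (A i * (f (y i) - f (x i)) - A (i - 1) * (f (y (i - 1)) - f (x i))
            - a i * ⟪q i, v i - x i⟫
            + a i * ⟪gradient f (x i) - q i, x i - u⟫
            - (1 + A (i - 1) * γ) / 2 * ‖v i - v (i - 1)‖ ^ 2))
        + ‖u - x 0‖ ^ 2 / 2 - (1 + A k * γ) / 2 * ‖u - v k‖ ^ 2 := by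
  have hAsum : ∀ k : ℕ, A k = ∑ i ∈ Finset.Icc 1 k, a i := by
    intro k
    induction k with
    | zero => simp [hA0]
    | succ n ih =>
      have h1 := hA (n + 1) (by omega)
      rw [Nat.add_sub_cancel] at h1
      rw [Finset.sum_Icc_succ_top (by omega : 1 ≤ n + 1), ← ih, h1]
  have hApos : ∀ k, 1 ≤ k → 0 < A k := by
    intro k hk
    induction k with
    | zero => omega
    | succ n ih =>
      have h1 := hA (n + 1) (by omega)
      rw [Nat.add_sub_cancel] at h1
      rcases Nat.eq_zero_or_pos n with h | h
      · subst h; rw [h1, hA0]; simpa using hapos 1 le_rfl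
      · have h2 := ih (by omega)
        have h3 := hapos (n + 1) (by omega)
        linarith
  set Φ : ℕ → Euc d → ℝ := fun k u => ‖u - x 0‖ ^ 2 / 2 +
      ∑ i ∈ Finset.Icc 1 k, a i * (f (x i) + ⟪q i, u - x i⟫) with hΦdef
  set G : ℕ → Euc d → Euc d := fun k w => (w - x 0) + ∑ i ∈ Finset.Icc 1 k, a i • q i with hGdef
  have hΦexp : ∀ (k : ℕ) (w u : Euc d), Φ k u = Φ k w + ⟪G k w, u - w⟫ + ‖u - w‖ ^ 2 / 2 := by
    intro k w u
    have h1 : ⟪G k w, u - w⟫ = ⟪w - x 0, u - w⟫ + ∑ i ∈ Finset.Icc 1 k, a i * ⟪q i, u - w⟫ := by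
      simp only [hGdef]
      rw [inner_add_left, sum_inner]
      congr 1
      exact Finset.sum_congr rfl fun i _ => real_inner_smul_left _ _ _
    have h2 : ∀ i ∈ Finset.Icc 1 k, a i * (f (x i) + ⟪q i, u - x i⟫)
        = a i * (f (x i) + ⟪q i, w - x i⟫) + a i * ⟪q i, u - w⟫ := by
      intro i _
      have e : (u : Euc d) - x i = (w - x i) + (u - w) := by abel
      rw [e, inner_add_right]; ring
    simp only [hΦdef]
    rw [Finset.sum_congr rfl h2, Finset.sum_add_distrib, quad_expand (x 0) w u, h1]
    ring
  have hmin : ∀ k, 1 ≤ k → ∀ z : Euc d, Φ k (v k) + A k * g (v k) ≤ Φ k z + A k * g z := by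
    intro k hk z
    have h0 := isMinOn_iff.mp (hv k hk) z (Set.mem_univ z)
    have hsplit : ∀ w : Euc d, (‖w - x 0‖ ^ 2 / 2 +
        ∑ i ∈ Finset.Icc 1 k, a i * (f (x i) + ⟪q i, w - x i⟫ + g w)) = Φ k w + A k * g w := by
      intro w
      have h2 : ∀ i ∈ Finset.Icc 1 k, a i * (f (x i) + ⟪q i, w - x i⟫ + g w)
          = a i * (f (x i) + ⟪q i, w - x i⟫) + a i * g w := fun i _ => by ring
      simp only [hΦdef]
      rw [Finset.sum_congr rfl h2, Finset.sum_add_distrib, ← Finset.sum_mul, ← hAsum k, add_assoc]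
    rw [← hsplit, ← hsplit]
    exact h0
  have hsubgrad : ∀ k, 1 ≤ k → ∀ z : Euc d,
      g (v k) + ⟪(A k)⁻¹ • (-(G k (v k))), z - v k⟫ ≤ g z := by
    intro k hk z
    have hAk := hApos k hk
    have key : A k * (g (v k) - g z) ≤ ⟪G k (v k), z - v k⟫ := by
      apply aux_t_limit _ _ (‖z - v k‖ ^ 2 / 2) (by positivity)
      intro t ht0 ht1
      have hw := hmin k hk (v k + t • (z - v k))
      have hΦt : Φ k (v k + t • (z - v k))
          = Φ k (v k) + t * ⟪G k (v k), z - v k⟫ + t ^ 2 * (‖z - v k‖ ^ 2 / 2) := by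
        rw [hΦexp k (v k) (v k + t • (z - v k)), add_sub_cancel_left, real_inner_smul_right,
          norm_smul, Real.norm_eq_abs, abs_of_pos ht0]
        ring
      have hgt : g (v k + t • (z - v k)) ≤ (1 - t) * g (v k) + t * g z := by
        have hco := hgconv.2 (Set.mem_univ (v k)) (Set.mem_univ z)
          (by linarith : (0:ℝ) ≤ 1 - t) ht0.le (by ring)
        have hpt : (1 - t) • v k + t • z = v k + t • (z - v k) := by module
        rw [hpt] at hco
        simpa using hco
      have hgt' := mul_le_mul_of_nonneg_left hgt hAk.le
      rw [hΦt] at hw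
      nlinarith [hw, hgt', ht0]
    have hinner : ⟪(A k)⁻¹ • (-(G k (v k))), z - v k⟫
        = -((A k)⁻¹ * ⟪G k (v k), z - v k⟫) := by
      rw [real_inner_smul_left, inner_neg_left]; ring
    rw [hinner]
    rw [← sub_nonneg]
    have h5 : g (v k) - g z ≤ (A k)⁻¹ * ⟪G k (v k), z - v k⟫ := by
      rw [← mul_le_mul_iff_of_pos_left hAk, ← mul_assoc, mul_inv_cancel₀ (ne_of_gt hAk), one_mul]
      linarith [key]
    linarith [h5]
  have hstrong : ∀ k, 1 ≤ k → ∀ u : Euc d,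
      Φ k (v k) + A k * g (v k) + (1 + A k * γ) / 2 * ‖u - v k‖ ^ 2 ≤ Φ k u + A k * g u := by
    intro k hk u
    have hAk := hApos k hk
    have hsc := hgsc (v k) u ((A k)⁻¹ • (-(G k (v k)))) (fun z => hsubgrad k hk z)
    have hinner : ⟪(A k)⁻¹ • (-(G k (v k))), u - v k⟫
        = -((A k)⁻¹ * ⟪G k (v k), u - v k⟫) := by
      rw [real_inner_smul_left, inner_neg_left]; ring
    rw [hinner] at hsc
    have h2 := mul_le_mul_of_nonneg_left hsc hAk.le
    have e0 : A k * ((A k)⁻¹ * ⟪G k (v k), u - v k⟫) = ⟪G k (v k), u - v k⟫ := by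
      rw [← mul_assoc, mul_inv_cancel₀ (ne_of_gt hAk), one_mul]
    have hΦu := hΦexp k (v k) u
    nlinarith [h2, e0, hΦu]
  have hjensen : ∀ k, 1 ≤ k → A (k + 1) * g (y (k + 1)) ≤ A k * g (y k) + a (k + 1) * g (v (k + 1)) := by
    intro k hk
    have hAk := hApos k hk
    have hAk1 := hApos (k + 1) (by omega)
    have hak1 := hapos (k + 1) (by omega)
    have hArec := hA (k + 1) (by omega)
    rw [Nat.add_sub_cancel] at hArec
    have hsum : ∑ i ∈ Finset.Icc 1 (k + 1), a i • v i = A k • y k + a (k + 1) • v (k + 1) := by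
      rw [Finset.sum_Icc_succ_top (by omega : 1 ≤ k + 1)]
      congr 1
      rw [hy k hk, smul_smul, mul_inv_cancel₀ (ne_of_gt hAk), one_smul]
    have hyform : y (k + 1) = (A k / A (k + 1)) • y k + (a (k + 1) / A (k + 1)) • v (k + 1) := by
      rw [hy (k + 1) (by omega), hsum, smul_add, smul_smul, smul_smul]
      rw [inv_mul_eq_div, inv_mul_eq_div]
    have hco := hgconv.2 (Set.mem_univ (y k)) (Set.mem_univ (v (k + 1)))
      (div_pos hAk hAk1).le (div_pos hak1 hAk1).le
      (by rw [← add_div, ← hArec, div_self (ne_of_gt hAk1)])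
    rw [← hyform] at hco
    simp only [smul_eq_mul] at hco
    have h2 := mul_le_mul_of_nonneg_left hco hAk1.le
    have e1 : A (k + 1) * (A k / A (k + 1) * g (y k) + a (k + 1) / A (k + 1) * g (v (k + 1)))
        = A k * g (y k) + a (k + 1) * g (v (k + 1)) := by
      field_simp
    linarith [h2, e1.le, e1.ge]
  set B : ℕ → ℝ := fun i => A i * (f (y i) - f (x i)) - A (i - 1) * (f (y (i - 1)) - f (x i))
      - a i * ⟪q i, v i - x i⟫ - (1 + A (i - 1) * γ) / 2 * ‖v i - v (i - 1)‖ ^ 2 with hBdef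
  have claim : ∀ k, 1 ≤ k →
      A k * (f (y k) + g (y k)) ≤ Φ k (v k) + A k * g (v k) + ∑ i ∈ Finset.Icc 1 k, B i := by
    intro k
    induction k with
    | zero => omega
    | succ n ih =>
      intro _
      rcases Nat.eq_zero_or_pos n with hn | hn
      · subst hn
        have hA1 : A 1 = a 1 := by
          have h1 := hA 1 le_rfl
          simpa [hA0] using h1
        have hy1 : y 1 = v 1 := by
          rw [hy 1 le_rfl]
          rw [Finset.Icc_self, Finset.sum_singleton, smul_smul, hA1,
            inv_mul_cancel₀ (ne_of_gt (hapos 1 le_rfl)), one_smul]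
        have hΦ1 : Φ 1 (v 1) = ‖v 1 - x 0‖ ^ 2 / 2 + a 1 * (f (x 1) + ⟪q 1, v 1 - x 1⟫) := by
          simp only [hΦdef, Finset.Icc_self, Finset.sum_singleton]
        have hB1 : B 1 = A 1 * (f (y 1) - f (x 1)) - a 1 * ⟪q 1, v 1 - x 1⟫
            - 1 / 2 * ‖v 1 - x 0‖ ^ 2 := by
          simp only [hBdef]
          norm_num [hA0, hv0]
        rw [Finset.Icc_self, Finset.sum_singleton, hΦ1, hB1, hy1, hA1]
        ring_nf
        rfl
      · have ihn := ih hn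
        have hs := hstrong n hn (v (n + 1))
        have hjn := hjensen n hn
        have hArec := hA (n + 1) (by omega)
        rw [Nat.add_sub_cancel] at hArec
        have hΦsucc : Φ (n + 1) (v (n + 1)) = Φ n (v (n + 1))
            + a (n + 1) * (f (x (n + 1)) + ⟪q (n + 1), v (n + 1) - x (n + 1)⟫) := by
          simp only [hΦdef]
          rw [Finset.sum_Icc_succ_top (by omega : 1 ≤ n + 1)]
          ring
        have hBsucc : B (n + 1) = A (n + 1) * (f (y (n + 1)) - f (x (n + 1)))
            - A n * (f (y n) - f (x (n + 1)))
            - a (n + 1) * ⟪q (n + 1), v (n + 1) - x (n + 1)⟫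
            - (1 + A n * γ) / 2 * ‖v (n + 1) - v n‖ ^ 2 := by
          simp only [hBdef, Nat.add_sub_cancel]
        have hsumB : ∑ i ∈ Finset.Icc 1 (n + 1), B i
            = (∑ i ∈ Finset.Icc 1 n, B i) + B (n + 1) :=
          Finset.sum_Icc_succ_top (by omega) _
        rw [hsumB, hΦsucc, hBsucc]
        have hs1 : A (n + 1) * f (x (n + 1)) = A n * f (x (n + 1)) + a (n + 1) * f (x (n + 1)) := by
          rw [hArec]; ring
        have hs4 : A (n + 1) * g (v (n + 1)) = A n * g (v (n + 1)) + a (n + 1) * g (v (n + 1)) := by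
          rw [hArec]; ring
        clear_value B Φ G
        linarith [ihn, hs, hjn, hs1, hs4]
  intro u k hk
  have h1 := claim k hk
  have h2 := hstrong k hk u
  have h3 : ∑ i ∈ Finset.Icc 1 k, a i * (f (x i) + ⟪q i, u - x i⟫)
      ≤ A k * f u + ∑ i ∈ Finset.Icc 1 k, a i * ⟪gradient f (x i) - q i, x i - u⟫ := by
    rw [hAsum k, Finset.sum_mul, ← Finset.sum_add_distrib]
    apply Finset.sum_le_sum
    intro i hi
    have hai := (hapos i (Finset.mem_Icc.mp hi).1).le
    have hsup := grad_support hfconv hfdiff (x i) u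
    have hid : ⟪gradient f (x i) - q i, x i - u⟫
        = ⟪q i, u - x i⟫ - ⟪gradient f (x i), u - x i⟫ := by
      have e : (x i : Euc d) - u = -(u - x i) := by abel
      rw [inner_sub_left, e, inner_neg_right, inner_neg_right]
      ring
    rw [hid]
    nlinarith [mul_le_mul_of_nonneg_left hsup hai]
  have h4 : (∑ i ∈ Finset.Icc 1 k,
        (A i * (f (y i) - f (x i)) - A (i - 1) * (f (y (i - 1)) - f (x i))
          - a i * ⟪q i, v i - x i⟫
          + a i * ⟪gradient f (x i) - q i, x i - u⟫
          - (1 + A (i - 1) * γ) / 2 * ‖v i - v (i - 1)‖ ^ 2))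
      = (∑ i ∈ Finset.Icc 1 k, B i)
        + ∑ i ∈ Finset.Icc 1 k, a i * ⟪gradient f (x i) - q i, x i - u⟫ := by
    rw [← Finset.sum_add_distrib]
    apply Finset.sum_congr rfl
    intro i _
    simp only [hBdef]
    ring
  have hΦu : Φ k u = ‖u - x 0‖ ^ 2 / 2 + ∑ i ∈ Finset.Icc 1 k, a i * (f (x i) + ⟪q i, u - x i⟫) := by
    simp only [hΦdef]
  have hsplit1 : A k * ((f (y k) + g (y k)) - (f u + g u))
      = A k * (f (y k) + g (y k)) - A k * f u - A k * g u := by ring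
  rw [h4]
  clear_value B Φ G
  linarith [h1, h2, h3, hΦu.le, hΦu.ge, hsplit1.le, hsplit1.ge]
end
end

section
/- Consider the A-CODER iterates. If for all k ≥ 1 the step sizes satisfy a_k²/A_k ≤ 2(1 + A_{k−1}γ)/(5L), then for every u ∈ ℝ^d and every k ≥ 1: E_k(u) ≤ a_k ⟨∇f(x_k) − p_k, v_k − u⟩ − a_{k−1}⟨∇f(x_{k−1}) − p_{k−1}, v_{k−1} − u⟩ − ((1 + A_{k−1}γ)/10)‖v_k − v_{k−1}‖² + ((1 + A_{k−2}γ)/10)‖v_{k−1} − v_{k−2}‖², where E_k(u) := A_k (f(y_k) − f(x_k)) − A_{k−1}(f(y_{k−1}) − f(x_k)) − a_k ⟨q_k, v_k − x_k⟩ + a_k ⟨∇f(x_k) − q_k, x_k − u⟩ − ((1 + A_{k−1}γ)/2)‖v_k − v_{k−1}‖², and where A_{−1} := 0, v_{−1} := x_0. -/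
noncomputable section
open MeasureTheory Finset Set RealInnerProductSpace

/-- The A-CODER iterates (Algorithm 1), encoded via their characterizing properties.
The prox step is encoded as minimization of the (block-separable) objective. -/
structure ACoder (d m : ℕ) (blk : Fin d → Fin m) (f g : Euc d → ℝ)
    (gj : Fin m → Euc d → ℝ) (Q : Fin m → Matrix (Fin d) (Fin d) ℝ) (γ : ℝ) where
  x0 : Euc d
  a : ℕ → ℝ
  A : ℕ → ℝ
  x : ℕ → Euc d
  v : ℕ → Euc d
  y : ℕ → Euc d
  p : ℕ → Euc d
  q : ℕ → Euc d
  hmono : Monotone blk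
  hsurj : Function.Surjective blk
  hpsd : ∀ j, (Q j).PosSemidef
  hLpos : 0 < bigL blk Q
  hfconv : ConvexOn ℝ Set.univ f
  hfdiff : Differentiable ℝ f
  hflip : BlockLip blk f Q
  hγ : 0 ≤ γ
  hgconv : ConvexOn ℝ Set.univ g
  hgsc : SubgradStrongConvex γ g
  hgsep : ∀ z, g z = ∑ j, gj j z
  hgjblock : ∀ j u u', blockMask blk j u = blockMask blk j u' → gj j u = gj j u'
  hgjconv : ∀ j, ConvexOn ℝ Set.univ (gj j)
  hx0 : x 0 = x0
  hv0 : v 0 = x0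
  hy0 : y 0 = x0
  hp0 : p 0 = gradient f x0
  ha0 : a 0 = 0
  hA0 : A 0 = 0
  hapos : ∀ k, 1 ≤ k → 0 < a k
  hstep : ∀ k, 1 ≤ k → a k ^ 2 / A k ≤ 2 * (1 + A (k - 1) * γ) / (5 * bigL blk Q)
  hA : ∀ k, 1 ≤ k → A k = A (k - 1) + a k
  hx : ∀ k, 1 ≤ k → x k = (A (k - 1) / A k) • y (k - 1) + (a k / A k) • v (k - 1)
  hp : ∀ k, 1 ≤ k → ∀ j, blockMask blk j (p k) =
      blockMask blk j (gradient f (blockCombine blk ((j : ℕ) + 1) (x k) (y k)))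
  hq : ∀ k, 1 ≤ k →
      q k = p k + (a (k - 1) / a k) • (gradient f (x (k - 1)) - p (k - 1))
  hv : ∀ k, 1 ≤ k → IsMinOn
      (fun u => A k * g u + ‖u - (x0 - ∑ i ∈ Finset.Icc 1 k, a i • q i)‖ ^ 2 / 2)
      Set.univ (v k)
  hy : ∀ k, 1 ≤ k → y k = (A (k - 1) / A k) • y (k - 1) + (a k / A k) • v k

namespace AC
variable {d m : ℕ}

def mGE (blk : Fin d → Fin m) (t : ℕ) (z : Euc d) : Euc d :=
  (EuclideanSpace.equiv (Fin d) ℝ).symm fun i => if t ≤ (blk i : ℕ) + 1 then z i else 0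

lemma inner_eq (x y : Euc d) : ⟪x, y⟫ = ∑ i, x i * y i := by
  simp [PiLp.inner_apply, RCLike.inner_apply, conj_trivial, mul_comm]

lemma normsq_eq (x : Euc d) : ‖x‖ ^ 2 = ∑ i, (x i) ^ 2 := by
  rw [EuclideanSpace.norm_eq, Real.sq_sqrt (by positivity)]
  simp [sq_abs]

variable {blk : Fin d → Fin m}

lemma blockMask_apply (j : Fin m) (z : Euc d) (i : Fin d) :
    blockMask blk j z i = if blk i = j then z i else 0 := rfl

lemma mGE_apply (t : ℕ) (z : Euc d) (i : Fin d) :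
    mGE blk t z i = if t ≤ (blk i : ℕ) + 1 then z i else 0 := rfl

lemma mGE_one (z : Euc d) : mGE blk 1 z = z := by
  ext i; simp [mGE_apply]

lemma mGE_top (z : Euc d) : mGE blk (m + 1) z = 0 := by
  ext i
  rw [mGE_apply, if_neg (by have := (blk i).isLt; omega)]
  rfl

lemma mGE_split (t : ℕ) (h1 : 1 ≤ t) (h2 : t ≤ m) (z : Euc d) :
    mGE blk t z = mGE blk (t + 1) z + blockMask blk ⟨t - 1, by omega⟩ z := by
  ext i
  simp only [mGE_apply, PiLp.add_apply, blockMask_apply, Fin.ext_iff]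
  rcases Nat.lt_or_ge ((blk i : ℕ) + 1) t with h | h
  · rw [if_neg (by omega), if_neg (by omega), if_neg (by omega)]; ring
  rcases Nat.lt_or_ge (blk i : ℕ) t with h' | h'
  · rw [if_pos (by omega), if_neg (by omega), if_pos (by omega)]; ring
  · rw [if_pos (by omega), if_pos (by omega), if_neg (by omega)]; ring

lemma blockMask_smul (j : Fin m) (a : ℝ) (z : Euc d) :
    blockMask blk j (a • z) = a • blockMask blk j z := by
  ext i; simp only [blockMask_apply, PiLp.smul_apply, smul_eq_mul, mul_ite, mul_zero]

lemma blockMask_idem (j : Fin m) (z : Euc d) :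
    blockMask blk j (blockMask blk j z) = blockMask blk j z := by
  ext i; simp only [blockMask_apply]; split <;> simp_all

lemma inner_blockMask (j : Fin m) (x y : Euc d) :
    ⟪x, blockMask blk j y⟫ = ⟪blockMask blk j x, blockMask blk j y⟫ := by
  rw [inner_eq, inner_eq]
  refine Finset.sum_congr rfl fun i _ => ?_
  simp only [blockMask_apply]; split <;> simp

lemma inner_sub_blockMask (g1 g2 : Euc d) (j : Fin m) (y : Euc d) :
    ⟪g1 - g2, blockMask blk j y⟫
      = ⟪blockMask blk j g1 - blockMask blk j g2, blockMask blk j y⟫ := by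
  rw [inner_eq, inner_eq]
  refine Finset.sum_congr rfl fun i _ => ?_
  simp only [blockMask_apply, PiLp.sub_apply]; split <;> simp

lemma sum_blockMask (z : Euc d) : ∑ j, blockMask blk j z = z := by
  ext i
  rw [WithLp.ofLp_sum, Finset.sum_apply]
  simp only [blockMask_apply]
  rw [Finset.sum_ite_eq Finset.univ (blk i) (fun _ => z i)]
  simp

lemma sum_normsq_blockMask (z : Euc d) : ∑ j, ‖blockMask blk j z‖ ^ 2 = ‖z‖ ^ 2 := by
  simp only [normsq_eq, blockMask_apply]
  rw [Finset.sum_comm]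
  refine Finset.sum_congr rfl fun i _ => ?_
  have : ∀ j : Fin m, (if blk i = j then z i else 0) ^ 2 = if blk i = j then z i ^ 2 else 0 := by
    intro j; split <;> simp
  rw [Finset.sum_congr rfl fun j _ => this j,
    Finset.sum_ite_eq Finset.univ (blk i) (fun _ => z i ^ 2)]
  simp

end AC

namespace AC
variable {d m : ℕ} {blk : Fin d → Fin m}

open scoped MatrixOrder in
def _root_.Matrix.PosSemidef.sqrt {Q : Matrix (Fin d) (Fin d) ℝ} (_hQ : Q.PosSemidef) :
    Matrix (Fin d) (Fin d) ℝ := CFC.sqrt Q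

open scoped MatrixOrder in
lemma _root_.Matrix.PosSemidef.posSemidef_sqrt {Q : Matrix (Fin d) (Fin d) ℝ} (hQ : Q.PosSemidef) :
    hQ.sqrt.PosSemidef := Matrix.nonneg_iff_posSemidef.mp (CFC.sqrt_nonneg Q)

open scoped MatrixOrder in
lemma _root_.Matrix.PosSemidef.sqrt_mul_self {Q : Matrix (Fin d) (Fin d) ℝ} (hQ : Q.PosSemidef) :
    hQ.sqrt * hQ.sqrt = Q := CFC.sqrt_mul_sqrt_self Q hQ.nonneg

lemma euclin_apply (A : Matrix (Fin d) (Fin d) ℝ) (v : Euc d) (i : Fin d) :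
    Matrix.toEuclideanLin A v i = ∑ i', A i i' * v i' := by
  rw [Matrix.toEuclideanLin_apply]; rfl

lemma quadForm_eq_norm {Q : Matrix (Fin d) (Fin d) ℝ} (hQ : Q.PosSemidef) (z : Euc d) :
    quadForm Q z = ‖Matrix.toEuclideanLin hQ.sqrt z‖ ^ 2 := by
  have hsym : ∀ a b, hQ.sqrt a b = hQ.sqrt b a := by
    intro a b
    have h := hQ.posSemidef_sqrt.1
    have := congrFun (congrFun h b) a
    simpa [Matrix.conjTranspose_apply] using this
  have hQe : ∀ a b, Q a b = ∑ i, hQ.sqrt a i * hQ.sqrt i b := by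
    intro a b
    conv_lhs => rw [← hQ.sqrt_mul_self]
    rw [Matrix.mul_apply]
  rw [normsq_eq]
  simp only [euclin_apply]
  unfold quadForm
  calc ∑ a, ∑ b, Q a b * z a * z b
      = ∑ a, ∑ b, ∑ i, (hQ.sqrt i a * z a) * (hQ.sqrt i b * z b) := by
        refine Finset.sum_congr rfl fun a _ => Finset.sum_congr rfl fun b _ => ?_
        rw [hQe, Finset.sum_mul, Finset.sum_mul]
        refine Finset.sum_congr rfl fun i _ => ?_
        rw [hsym a i]; ring
    _ = ∑ a, ∑ i, ∑ b, (hQ.sqrt i a * z a) * (hQ.sqrt i b * z b) :=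
        Finset.sum_congr rfl fun a _ => Finset.sum_comm
    _ = ∑ i, ∑ a, ∑ b, (hQ.sqrt i a * z a) * (hQ.sqrt i b * z b) := Finset.sum_comm
    _ = ∑ i, (∑ a, hQ.sqrt i a * z a) ^ 2 := by
        refine Finset.sum_congr rfl fun i _ => ?_
        rw [sq, Finset.sum_mul_sum]
  
lemma quadForm_nonneg {Q : Matrix (Fin d) (Fin d) ℝ} (hQ : Q.PosSemidef) (z : Euc d) :
    0 ≤ quadForm Q z := by
  rw [quadForm_eq_norm hQ]; positivity

lemma quadForm_keepGE (t : ℕ) (Q : Matrix (Fin d) (Fin d) ℝ) (z : Euc d) :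
    quadForm (keepGE blk t Q) z = quadForm Q (mGE blk t z) := by
  unfold quadForm
  refine Finset.sum_congr rfl fun a _ => Finset.sum_congr rfl fun b _ => ?_
  simp only [keepGE, Matrix.of_apply, mGE_apply]
  by_cases h1 : t ≤ (blk a : ℕ) + 1 <;> by_cases h2 : t ≤ (blk b : ℕ) + 1 <;>
    simp [h1, h2]

lemma quadForm_matrix_sum {ι : Type*} (s : Finset ι) (M : ι → Matrix (Fin d) (Fin d) ℝ)
    (z : Euc d) : quadForm (∑ j ∈ s, M j) z = ∑ j ∈ s, quadForm (M j) z := by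
  unfold quadForm
  calc ∑ a, ∑ b, (∑ j ∈ s, M j) a b * z a * z b
      = ∑ a, ∑ b, ∑ j ∈ s, M j a b * z a * z b := by
        refine Finset.sum_congr rfl fun a _ => Finset.sum_congr rfl fun b _ => ?_
        rw [Matrix.sum_apply, Finset.sum_mul, Finset.sum_mul]
    _ = ∑ a, ∑ j ∈ s, ∑ b, M j a b * z a * z b :=
        Finset.sum_congr rfl fun a _ => Finset.sum_comm
    _ = ∑ j ∈ s, ∑ a, ∑ b, M j a b * z a * z b := Finset.sum_comm

lemma quadForm_add (A B : Matrix (Fin d) (Fin d) ℝ) (z : Euc d) :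
    quadForm (A + B) z = quadForm A z + quadForm B z := by
  unfold quadForm
  rw [← Finset.sum_add_distrib]
  refine Finset.sum_congr rfl fun a _ => ?_
  rw [← Finset.sum_add_distrib]
  refine Finset.sum_congr rfl fun b _ => ?_
  simp [Matrix.add_apply]; ring

lemma quadForm_le_spec (Q : Matrix (Fin d) (Fin d) ℝ) (z : Euc d) :
    quadForm Q z ≤ specNorm Q * ‖z‖ ^ 2 := by
  have h1 : quadForm Q z = ⟪(Matrix.toEuclideanCLM (𝕜 := ℝ) Q) z, z⟫ := by
    have hc : (Matrix.toEuclideanCLM (𝕜 := ℝ) Q) z = Matrix.toEuclideanLin Q z := by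
      have := Matrix.coe_toEuclideanCLM_eq_toEuclideanLin (𝕜 := ℝ) (A := Q)
      exact DFunLike.congr_fun this z
    rw [hc, inner_eq]
    unfold quadForm
    refine Finset.sum_congr rfl fun a _ => ?_
    rw [euclin_apply, Finset.sum_mul]
    refine Finset.sum_congr rfl fun b _ => ?_
    ring
  rw [h1]
  calc ⟪(Matrix.toEuclideanCLM (𝕜 := ℝ) Q) z, z⟫
      ≤ ‖(Matrix.toEuclideanCLM (𝕜 := ℝ) Q) z‖ * ‖z‖ := real_inner_le_norm _ _
    _ ≤ (‖Matrix.toEuclideanCLM (𝕜 := ℝ) Q‖ * ‖z‖) * ‖z‖ := by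
        have := (Matrix.toEuclideanCLM (𝕜 := ℝ) Q).le_opNorm z
        nlinarith [norm_nonneg z]
    _ = specNorm Q * ‖z‖ ^ 2 := by rw [specNorm]; ring

end AC

namespace AC
open Filter Topology
variable {d m : ℕ} {blk : Fin d → Fin m} {f : Euc d → ℝ}
  {Q : Fin m → Matrix (Fin d) (Fin d) ℝ}

lemma hasDerivAt_line (hf : Differentiable ℝ f) (x w : Euc d) :
    HasDerivAt (fun t : ℝ => f (x + t • w)) ⟪gradient f x, w⟫ 0 := by
  have h2 : HasFDerivAt f ((InnerProductSpace.toDual ℝ (Euc d)) (gradient f x))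
      (x + (0:ℝ) • w) := by
    simpa using (hf x).hasGradientAt.hasFDerivAt
  have h3 : HasDerivAt (fun t : ℝ => x + t • w) w 0 := by
    simpa using ((hasDerivAt_id (0:ℝ)).smul_const w).const_add x
  exact h2.comp_hasDerivAt 0 h3

lemma convex_grad (hconv : ConvexOn ℝ Set.univ f) (hf : Differentiable ℝ f)
    (x z : Euc d) : f x + ⟪gradient f x, z - x⟫ ≤ f z := by
  set w := z - x with hw
  set φ : ℝ → ℝ := fun t => f (x + t • w) with hφ
  have hd : HasDerivAt φ ⟪gradient f x, w⟫ 0 := hasDerivAt_line hf x w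
  have hslope : Tendsto (slope φ 0) (𝓝[>] 0) (𝓝 ⟪gradient f x, w⟫) := by
    have := hasDerivAt_iff_tendsto_slope.mp hd
    exact this.mono_left (nhdsWithin_mono 0 (fun t ht => ne_of_gt ht))
  have hev : ∀ᶠ t in 𝓝[>] (0:ℝ), slope φ 0 t ≤ f z - f x := by
    filter_upwards [Ioc_mem_nhdsGT_of_mem (by constructor <;> norm_num :
      (0:ℝ) ∈ Set.Ico 0 1)] with t ht
    have hcv := hconv.2 (Set.mem_univ x) (Set.mem_univ z)
      (by linarith [ht.2] : (0:ℝ) ≤ 1 - t) (le_of_lt ht.1) (by ring)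
    have he : (1 - t) • x + t • z = x + t • w := by rw [hw]; module
    rw [he] at hcv
    simp only [smul_eq_mul] at hcv
    rw [slope_def_field]
    have hφ0 : φ 0 = f x := by simp [hφ]
    have : φ t ≤ f x + t * (f z - f x) := by simpa [hφ] using by nlinarith [hcv]
    rw [hφ0]
    have ht0 : (0:ℝ) < t := ht.1
    rw [div_le_iff₀ (by simpa using ht0)]
    simp only [sub_zero]
    nlinarith
  have := le_of_tendsto hslope hev
  linarith [this]

lemma gradlip (hpsd : ∀ j, (Q j).PosSemidef) (hflip : BlockLip blk f Q)
    (j : Fin m) (a b v : Euc d) :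
    ⟪gradient f a - gradient f b, blockMask blk j v⟫ ≤
      ‖Matrix.toEuclideanLin (hpsd j).sqrt (a - b)‖ * ‖blockMask blk j v‖ := by
  rw [inner_sub_blockMask]
  have h1 := real_inner_le_norm (blockMask blk j (gradient f a) - blockMask blk j (gradient f b))
    (blockMask blk j v)
  have h2 : ‖blockMask blk j (gradient f a) - blockMask blk j (gradient f b)‖ ≤
      ‖Matrix.toEuclideanLin (hpsd j).sqrt (a - b)‖ := by
    have h3 := hflip j a b
    rw [quadForm_eq_norm (hpsd j)] at h3
    calc ‖blockMask blk j (gradient f a) - blockMask blk j (gradient f b)‖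
        = Real.sqrt (‖blockMask blk j (gradient f a) - blockMask blk j (gradient f b)‖^2) := by
          rw [Real.sqrt_sq (norm_nonneg _)]
      _ ≤ Real.sqrt (‖Matrix.toEuclideanLin (hpsd j).sqrt (a - b)‖^2) := Real.sqrt_le_sqrt h3
      _ = _ := Real.sqrt_sq (norm_nonneg _)
  calc ⟪blockMask blk j (gradient f a) - blockMask blk j (gradient f b), blockMask blk j v⟫
      ≤ ‖blockMask blk j (gradient f a) - blockMask blk j (gradient f b)‖ * ‖blockMask blk j v‖ := h1
    _ ≤ _ := mul_le_mul_of_nonneg_right h2 (norm_nonneg _)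

lemma limN (K X : ℝ) (hK : 0 ≤ K) (h : ∀ N : ℕ, 1 ≤ N → X ≤ K / N) : X ≤ 0 := by
  by_contra hc
  push_neg at hc
  obtain ⟨N, hN⟩ := exists_nat_gt (K / X)
  have hN1 : 1 ≤ N := by
    rcases Nat.eq_zero_or_pos N with h0 | h1
    · exfalso; rw [h0] at hN; simp at hN; nlinarith [div_nonneg hK (le_of_lt hc)]
    · exact h1
  have hle := h N hN1
  have hNpos : (0:ℝ) < N := by exact_mod_cast Nat.pos_of_ne_zero (by omega)
  rw [div_lt_iff₀ hc] at hN
  rw [le_div_iff₀ hNpos] at hle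
  nlinarith
end AC

namespace AC
lemma young (C C' E bb aa : ℝ) (h1 : 1 ≤ C') (h2 : C' ≤ C) (h3 : 0 ≤ E)
    (h4 : E^2 ≤ 2/25*C'^2*aa^2) : E*bb ≤ C/5*bb^2 + C'/10*aa^2 := by
  have hC'pos : 0 < C' := by linarith
  have hcc : 0 ≤ (C - C')*(C'*bb^2) :=
    mul_nonneg (by linarith) (mul_nonneg (by linarith) (sq_nonneg bb))
  have hW : 0 ≤ (C/5*bb^2 + C'/10*aa^2 - E*bb) * (20*C') := by
    nlinarith [sq_nonneg (5*E - 2*C'*bb), h4, hcc]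
  by_contra h
  push_neg at h
  nlinarith [hW, hC'pos]
end AC

namespace AC
open Filter Topology
variable {d m : ℕ} {blk : Fin d → Fin m} {f : Euc d → ℝ}
  {Q : Fin m → Matrix (Fin d) (Fin d) ℝ}

lemma sum_odd (n : ℕ) : ∑ r ∈ Finset.range n, (2 * (r:ℝ) + 1) = (n:ℝ) ^ 2 := by
  induction n with
  | zero => simp
  | succ n ih => rw [Finset.sum_range_succ, ih]; push_cast; ring

lemma block_step (hpsd : ∀ j, (Q j).PosSemidef) (hconv : ConvexOn ℝ Set.univ f)
    (hf : Differentiable ℝ f) (hflip : BlockLip blk f Q)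
    (x c w : Euc d) (j : Fin m) (hw : blockMask blk j w = w) (N : ℕ) (hN : 1 ≤ N) :
    f (c + w) ≤ f c + ⟪gradient f x, w⟫
      + (‖Matrix.toEuclideanLin (hpsd j).sqrt (c - x)‖
         + ‖Matrix.toEuclideanLin (hpsd j).sqrt (c - x + w)‖) / 2 * ‖w‖
      + ‖Matrix.toEuclideanLin (hpsd j).sqrt w‖ * ‖w‖ / (2 * N) := by
  have hNpos : (0:ℝ) < N := by exact_mod_cast Nat.pos_of_ne_zero (by omega)
  have hN0 : (N:ℝ) ≠ 0 := ne_of_gt hNpos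
  set SL : Euc d → ℝ := fun v => ‖Matrix.toEuclideanLin (hpsd j).sqrt v‖ with hSL
  set B := SL (c - x) with hB
  set A := SL (c - x + w) with hA
  set gg : ℝ → ℝ := fun s => (1 - s/N) * B + (s/N) * A with hgg
  have hSeg : ∀ s : ℝ, 0 ≤ s → s ≤ N → SL ((c - x) + (s/N) • w) ≤ gg s := by
    intro s h0 h1
    have hs1 : s/N ≤ 1 := by rw [div_le_one hNpos]; exact h1
    have hs0 : 0 ≤ s/N := by positivity
    have he : (c - x) + (s/N) • w = (1 - s/N) • (c - x) + (s/N) • (c - x + w) := by module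
    rw [hSL]; simp only
    rw [he, map_add, _root_.map_smul, _root_.map_smul]
    calc ‖(1-s/N) • Matrix.toEuclideanLin (hpsd j).sqrt (c-x)
            + (s/N) • Matrix.toEuclideanLin (hpsd j).sqrt (c-x+w)‖
        ≤ ‖(1-s/N) • Matrix.toEuclideanLin (hpsd j).sqrt (c-x)‖
            + ‖(s/N) • Matrix.toEuclideanLin (hpsd j).sqrt (c-x+w)‖ := norm_add_le _ _
      _ = gg s := by
          rw [norm_smul, norm_smul, Real.norm_eq_abs, Real.norm_eq_abs,
            abs_of_nonneg (by linarith), abs_of_nonneg hs0]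
  have key : ∀ n : ℕ, n ≤ N → f (c + ((n:ℝ)/N) • w) ≤ f c + ((n:ℝ)/N) * ⟪gradient f x, w⟫
      + (‖w‖/(2*N)) * (∑ r ∈ Finset.range n, (gg (r:ℝ) + gg ((r:ℝ)+1)))
      + (n:ℝ) * (SL w * ‖w‖) / (2*N^2) := by
    intro n
    induction n with
    | zero => intro _; simp
    | succ n ih =>
      intro hn1
      have hn : n ≤ N := Nat.le_of_succ_le hn1
      have IH := ih hn
      set z := c + ((n:ℝ)/N) • w with hz
      set h := ((1:ℝ)/N) • w with hh
      have hzh : c + (((n:ℝ)+1)/N) • w = z + h := by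
        rw [hz, hh]; match_scalars <;> (push_cast; ring)
      have hm : blockMask blk j h = h := by
        have h2 : blockMask blk j (((1:ℝ)/N) • w) = ((1:ℝ)/N) • blockMask blk j w :=
          blockMask_smul _ _ _
        rw [hw] at h2
        rw [hh]; exact h2
      have hcv := convex_grad hconv hf (z + h) z
      have hneg : z - (z + h) = -h := by abel
      rw [hneg, inner_neg_right] at hcv
      have b1 := gradlip hpsd hflip j (z+h) z h
      rw [hm] at b1
      have hzz : z + h - z = h := add_sub_cancel_left z h
      rw [hzz] at b1
      have hSLh : SL h = (1/N) * SL w := by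
        rw [hSL, hh]; simp only [_root_.map_smul, norm_smul, Real.norm_eq_abs]
        rw [abs_of_nonneg (by positivity)]
      have hnh : ‖h‖ = (1/N) * ‖w‖ := by
        rw [hh, norm_smul, Real.norm_eq_abs, abs_of_nonneg (by positivity)]
      have b2 := gradlip hpsd hflip j z x h
      rw [hm] at b2
      have hzx : z - x = (c - x) + ((n:ℝ)/N) • w := by rw [hz]; abel
      have hb2' : SL (z - x) ≤ gg (n:ℝ) := by
        rw [hzx]
        exact hSeg (n:ℝ) (by positivity) (by exact_mod_cast hn)
      have b3 := gradlip hpsd hflip j (z+h) x h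
      rw [hm] at b3
      have hzhx : z + h - x = (c - x) + (((n:ℝ)+1)/N) • w := by
        rw [hz, hh]; match_scalars <;> (push_cast; ring)
      have hb3' : SL (z + h - x) ≤ gg ((n:ℝ)+1) := by
        rw [hzhx]
        exact hSeg ((n:ℝ)+1) (by positivity) (by exact_mod_cast hn1)
      have hid : ⟪gradient f (z+h), h⟫ = ⟪gradient f x, h⟫
          + (1/2) * ⟪gradient f (z+h) - gradient f z, h⟫
          + (1/2) * (⟪gradient f z - gradient f x, h⟫
            + ⟪gradient f (z+h) - gradient f x, h⟫) := by
        simp only [inner_sub_left]; ring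
      have hgxh : ⟪gradient f x, h⟫ = (1/N) * ⟪gradient f x, w⟫ := by
        rw [hh, real_inner_smul_right]
      have step : f (z + h) ≤ f z + (1/N) * ⟪gradient f x, w⟫
          + (‖w‖/(2*N)) * (gg (n:ℝ) + gg ((n:ℝ)+1)) + (SL w * ‖w‖) / (2*N^2) := by
        have e1 : ⟪gradient f (z+h) - gradient f z, h⟫ ≤ (1/N) * SL w * ((1/N) * ‖w‖) := by
          calc ⟪gradient f (z+h) - gradient f z, h⟫ ≤ SL h * ‖h‖ := b1
            _ = (1/N) * SL w * ((1/N) * ‖w‖) := by rw [hSLh, hnh]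
        have e2 : ⟪gradient f z - gradient f x, h⟫ ≤ gg (n:ℝ) * ((1/N) * ‖w‖) := by
          calc ⟪gradient f z - gradient f x, h⟫ ≤ SL (z - x) * ‖h‖ := b2
            _ ≤ gg (n:ℝ) * ((1/N) * ‖w‖) := by
                rw [← hnh]
                exact mul_le_mul_of_nonneg_right hb2' (norm_nonneg _)
        have e3 : ⟪gradient f (z+h) - gradient f x, h⟫ ≤ gg ((n:ℝ)+1) * ((1/N) * ‖w‖) := by
          calc ⟪gradient f (z+h) - gradient f x, h⟫ ≤ SL (z + h - x) * ‖h‖ := b3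
            _ ≤ gg ((n:ℝ)+1) * ((1/N) * ‖w‖) := by
                rw [← hnh]
                exact mul_le_mul_of_nonneg_right hb3' (norm_nonneg _)
        have hfzh : f (z+h) ≤ f z + ⟪gradient f (z+h), h⟫ := by linarith
        rw [hid, hgxh] at hfzh
        have hinv : (1/(N:ℝ)) * N = 1 := by rw [one_div, inv_mul_cancel₀ hN0]
        have harith1 : (1/2) * ((1/(N:ℝ)) * SL w * ((1/N) * ‖w‖)) = (SL w * ‖w‖) / (2*N^2) := by
          rw [eq_div_iff (by positivity : (2*(N:ℝ)^2) ≠ 0)]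
          linear_combination (SL w * ‖w‖ * ((1/(N:ℝ))*N + 1)) * hinv
        have harith2 : (1/2) * (gg (n:ℝ) * ((1/(N:ℝ)) * ‖w‖) + gg ((n:ℝ)+1) * ((1/N) * ‖w‖))
            = (‖w‖/(2*N)) * (gg (n:ℝ) + gg ((n:ℝ)+1)) := by
          rw [eq_comm, div_mul_eq_mul_div, div_eq_iff (by positivity : (2*(N:ℝ)) ≠ 0)]
          linear_combination (-(‖w‖ * (gg (n:ℝ) + gg ((n:ℝ)+1)))) * hinv
        linarith [e1, e2, e3, hfzh]
      simp only [Nat.cast_succ]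
      rw [hzh, Finset.sum_range_succ]
      have hc1 : (((n:ℝ)+1)/N) * ⟪gradient f x, w⟫
          = ((n:ℝ)/N) * ⟪gradient f x, w⟫ + (1/(N:ℝ)) * ⟪gradient f x, w⟫ := by ring
      have hc2 : ((n:ℝ)+1)*(SL w*‖w‖)/(2*(N:ℝ)^2)
          = (n:ℝ)*(SL w*‖w‖)/(2*N^2) + (SL w*‖w‖)/(2*N^2) := by ring
      have hc3 : (‖w‖/(2*(N:ℝ)))*((∑ r ∈ Finset.range n, (gg (r:ℝ) + gg ((r:ℝ)+1)))
            + (gg (n:ℝ) + gg ((n:ℝ)+1)))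
          = (‖w‖/(2*(N:ℝ)))*(∑ r ∈ Finset.range n, (gg (r:ℝ) + gg ((r:ℝ)+1)))
            + (‖w‖/(2*(N:ℝ)))*(gg (n:ℝ) + gg ((n:ℝ)+1)) := by ring
      linarith [IH, step]
  have hfin := key N (le_refl N)
  rw [div_self (ne_of_gt hNpos), one_smul] at hfin
  have hgsum : ∑ r ∈ Finset.range N, (gg (r:ℝ) + gg ((r:ℝ)+1)) = N * (B + A) := by
    have h1 : ∀ r : ℕ, gg (r:ℝ) + gg ((r:ℝ)+1) = 2*B + ((2*(r:ℝ)+1)/N)*(A-B) := by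
      intro r; rw [hgg]; simp only; field_simp [hN0]; ring
    rw [Finset.sum_congr rfl (fun r _ => h1 r)]
    rw [Finset.sum_add_distrib]
    have e : ∑ r ∈ Finset.range N, ((2*(r:ℝ)+1)/N*(A-B)) = ((N:ℝ)^2)/N*(A-B) := by
      rw [← Finset.sum_mul, ← Finset.sum_div, sum_odd]
    rw [e, Finset.sum_const, Finset.card_range]
    field_simp [hN0]
    ring
  rw [hgsum] at hfin
  have harith : (‖w‖/(2*(N:ℝ))) * ((N:ℝ) * (B + A)) = (B + A)/2 * ‖w‖ := by
    field_simp [hN0]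
  have harith2 : (N:ℝ) * (SL w * ‖w‖) / (2*(N:ℝ)^2) = SL w * ‖w‖ / (2*N) := by
    rw [div_eq_div_iff (by positivity) (by positivity)]; ring
  rw [harith, harith2] at hfin
  linarith [hfin]
end AC

namespace AC
open Filter Topology
variable {d m : ℕ} {blk : Fin d → Fin m} {f : Euc d → ℝ}
  {Q : Fin m → Matrix (Fin d) (Fin d) ℝ}

lemma smooth (hpsd : ∀ j, (Q j).PosSemidef) (hconv : ConvexOn ℝ Set.univ f)
    (hf : Differentiable ℝ f) (hflip : BlockLip blk f Q) (x u : Euc d) :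
    f (x + u) ≤ f x + ⟪gradient f x, u⟫ + bigL blk Q / 2 * ‖u‖ ^ 2 := by
  set L := bigL blk Q with hLdef
  have hLnn : 0 ≤ L := Real.sqrt_nonneg _
  have hspecnn : 0 ≤ specNorm (Qtilde blk Q) := norm_nonneg _
  have hL2 : L ^ 2 = 2 * specNorm (Qtilde blk Q) := Real.sq_sqrt (by linarith)
  set SL : (j : Fin m) → Euc d → ℝ :=
    fun j v => ‖Matrix.toEuclideanLin (hpsd j).sqrt v‖ with hSL
  set g := gradient f x with hg
  have hCS : ∑ j, (SL j (mGE blk ((j:ℕ)+2) u) + SL j (mGE blk ((j:ℕ)+1) u))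
      * ‖blockMask blk j u‖ ≤ L * ‖u‖ ^ 2 := by
    set F : Fin m → ℝ := fun j => SL j (mGE blk ((j:ℕ)+2) u) + SL j (mGE blk ((j:ℕ)+1) u)
      with hF
    have h1 := Finset.sum_mul_sq_le_sq_mul_sq Finset.univ F (fun j => ‖blockMask blk j u‖)
    have h2 : ∑ j, (F j) ^ 2 ≤ 2 * quadForm (Qtilde blk Q) u := by
      have hq : quadForm (Qtilde blk Q) u
          = ∑ j : Fin m, (quadForm (keepGE blk ((j:ℕ)+1) (Q j)) u
              + quadForm (keepGE blk ((j:ℕ)+2) (Q j)) u) := by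
        rw [Qtilde, quadForm_matrix_sum]
        exact Finset.sum_congr rfl fun j _ => quadForm_add _ _ _
      rw [hq, Finset.mul_sum]
      refine Finset.sum_le_sum fun j _ => ?_
      have e1 : SL j (mGE blk ((j:ℕ)+1) u) ^ 2 = quadForm (keepGE blk ((j:ℕ)+1) (Q j)) u := by
        rw [quadForm_keepGE, quadForm_eq_norm (hpsd j)]
      have e2 : SL j (mGE blk ((j:ℕ)+2) u) ^ 2 = quadForm (keepGE blk ((j:ℕ)+2) (Q j)) u := by
        rw [quadForm_keepGE, quadForm_eq_norm (hpsd j)]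
      rw [hF]
      simp only
      nlinarith [sq_nonneg (SL j (mGE blk ((j:ℕ)+2) u) - SL j (mGE blk ((j:ℕ)+1) u)), e1, e2]
    have h3 := quadForm_le_spec (Qtilde blk Q) u
    have h4 : ∑ j, ‖blockMask blk j u‖ ^ 2 = ‖u‖ ^ 2 := sum_normsq_blockMask u
    have hnn : 0 ≤ ∑ j, F j * ‖blockMask blk j u‖ := by
      refine Finset.sum_nonneg fun j _ => mul_nonneg ?_ (norm_nonneg _)
      rw [hF]; positivity
    have hqnn : 0 ≤ quadForm (Qtilde blk Q) u := by
      have := Finset.sum_nonneg (fun j (_ : j ∈ Finset.univ) => sq_nonneg (F j))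
      linarith
    have hsq : (∑ j, F j * ‖blockMask blk j u‖) ^ 2 ≤ (L * ‖u‖ ^ 2) ^ 2 := by
      calc (∑ j, F j * ‖blockMask blk j u‖) ^ 2
          ≤ (∑ j, (F j) ^ 2) * (∑ j, ‖blockMask blk j u‖ ^ 2) := h1
        _ ≤ (2 * quadForm (Qtilde blk Q) u) * ‖u‖ ^ 2 := by
            rw [h4]
            exact mul_le_mul_of_nonneg_right h2 (sq_nonneg _)
        _ ≤ (L * ‖u‖ ^ 2) ^ 2 := by
            have h5 := mul_le_mul_of_nonneg_right h3 (sq_nonneg ‖u‖)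
            have h6 : (L*‖u‖^2)^2 = 2*specNorm (Qtilde blk Q)*(‖u‖^2*‖u‖^2) := by
              rw [mul_pow, hL2]; ring
            linarith [h5, h6]
    nlinarith [hsq, hnn, mul_nonneg hLnn (sq_nonneg ‖u‖)]
  have hKnn : 0 ≤ (∑ j, SL j (blockMask blk j u) * ‖blockMask blk j u‖) / 2 := by
    apply div_nonneg _ (by norm_num)
    exact Finset.sum_nonneg fun j _ => mul_nonneg (norm_nonneg _) (norm_nonneg _)
  have hNbound : ∀ N : ℕ, 1 ≤ N →
      f (x + u) - (f x + ⟪g, u⟫ + L / 2 * ‖u‖ ^ 2)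
        ≤ ((∑ j, SL j (blockMask blk j u) * ‖blockMask blk j u‖) / 2) / N := by
    intro N hN
    have main : ∀ n : ℕ, n ≤ m →
        f (x + mGE blk (m+1-n) u) ≤ f x + ⟪g, mGE blk (m+1-n) u⟫
          + ∑ j ∈ Finset.univ.filter (fun j : Fin m => m+1-n ≤ (j:ℕ)+1),
              ((SL j (mGE blk ((j:ℕ)+2) u) + SL j (mGE blk ((j:ℕ)+1) u)) / 2
                  * ‖blockMask blk j u‖
               + SL j (blockMask blk j u) * ‖blockMask blk j u‖ / (2*N)) := by
      intro n
      induction n with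
      | zero =>
        intro _
        simp only [Nat.sub_zero]
        rw [mGE_top]
        have hfil : Finset.univ.filter (fun j : Fin m => m+1 ≤ (j:ℕ)+1) = ∅ := by
          apply Finset.filter_false_of_mem
          intro j _
          have := j.isLt
          omega
        rw [hfil, Finset.sum_empty]
        simp
      | succ n ih =>
        intro hn1
        have hn : n ≤ m := Nat.le_of_succ_le hn1
        have IH := ih hn
        set t := m - n with ht
        have ht1 : 1 ≤ t := by omega
        have ht2 : t ≤ m := by omega
        have e0 : m+1-(n+1) = t := by omega
        have e1 : m+1-n = t+1 := by omega
        rw [e0]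
        rw [e1] at IH
        have hm' : t - 1 < m := by omega
        have hj1 : ((⟨t-1, hm'⟩ : Fin m) : ℕ) + 1 = t := by simp; omega
        have hj2 : ((⟨t-1, hm'⟩ : Fin m) : ℕ) + 2 = t + 1 := by simp; omega
        have hsplit : mGE blk t u = mGE blk (t+1) u + blockMask blk ⟨t-1, hm'⟩ u :=
          mGE_split t ht1 ht2 u
        have bs := block_step hpsd hconv hf hflip x (x + mGE blk (t+1) u)
          (blockMask blk ⟨t-1, hm'⟩ u) ⟨t-1, hm'⟩ (blockMask_idem _ _) N hN
        have hc1 : x + mGE blk (t+1) u + blockMask blk ⟨t-1, hm'⟩ u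
            = x + mGE blk t u := by rw [hsplit]; abel
        have hc2 : x + mGE blk (t+1) u - x = mGE blk (t+1) u := add_sub_cancel_left _ _
        rw [hc1, hc2, ← hsplit] at bs
        have hfil : Finset.univ.filter (fun j : Fin m => t ≤ (j:ℕ)+1)
            = insert (⟨t-1, hm'⟩ : Fin m)
              (Finset.univ.filter (fun j : Fin m => t+1 ≤ (j:ℕ)+1)) := by
          ext j'
          simp only [Finset.mem_filter, Finset.mem_univ, true_and, Finset.mem_insert,
            Fin.ext_iff]
          omega
        have hnm : (⟨t-1, hm'⟩ : Fin m)
            ∉ Finset.univ.filter (fun j : Fin m => t+1 ≤ (j:ℕ)+1) := by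
          simp only [Finset.mem_filter, Finset.mem_univ, true_and]
          omega
        rw [hfil, Finset.sum_insert hnm]
        have hin : ⟪g, mGE blk t u⟫ = ⟪g, mGE blk (t+1) u⟫
            + ⟪g, blockMask blk ⟨t-1, hm'⟩ u⟫ := by
          rw [hsplit, inner_add_right]
        rw [hin, hj1, hj2]
        linarith [IH, bs]
    have hm := main m (le_refl m)
    have e2 : m+1-m = 1 := by omega
    rw [e2, mGE_one] at hm
    have hfil : Finset.univ.filter (fun j : Fin m => 1 ≤ (j:ℕ)+1) = Finset.univ := by
      apply Finset.filter_true_of_mem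
      intro j _
      omega
    rw [hfil, Finset.sum_add_distrib] at hm
    have hsum1 : ∑ j, (SL j (mGE blk ((j:ℕ)+2) u) + SL j (mGE blk ((j:ℕ)+1) u)) / 2
        * ‖blockMask blk j u‖
        = (∑ j, (SL j (mGE blk ((j:ℕ)+2) u) + SL j (mGE blk ((j:ℕ)+1) u))
            * ‖blockMask blk j u‖) / 2 := by
      rw [Finset.sum_div]
      exact Finset.sum_congr rfl fun j _ => by ring
    have hsum2 : ∑ j, SL j (blockMask blk j u) * ‖blockMask blk j u‖ / (2*(N:ℝ))
        = ((∑ j, SL j (blockMask blk j u) * ‖blockMask blk j u‖) / 2) / N := by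
      rw [← Finset.sum_div, div_div]
    rw [hsum1, hsum2] at hm
    linarith [hm, hCS]
  have := limN _ _ hKnn hNbound
  linarith
end AC

namespace AC
open Filter Topology
variable {d m : ℕ} {blk : Fin d → Fin m} {f : Euc d → ℝ}
  {Q : Fin m → Matrix (Fin d) (Fin d) ℝ}

lemma blockMask_sub (j : Fin m) (a b : Euc d) :
    blockMask blk j (a - b) = blockMask blk j a - blockMask blk j b := by
  ext i
  simp only [blockMask_apply, PiLp.sub_apply]
  split <;> simp

lemma delta_bound (hpsd : ∀ j, (Q j).PosSemidef) (hflip : BlockLip blk f Q)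
    (xx yy pp : Euc d)
    (hp : ∀ j : Fin m, blockMask blk j pp
        = blockMask blk j (gradient f (blockCombine blk ((j:ℕ)+1) xx yy))) :
    ‖gradient f xx - pp‖^2 ≤ specNorm (Qtilde blk Q) * ‖xx - yy‖^2 := by
  have hsub : ∀ j : Fin m,
      xx - blockCombine blk ((j:ℕ)+1) xx yy = mGE blk ((j:ℕ)+2) (xx - yy) := by
    intro j; ext i
    simp only [PiLp.sub_apply, mGE_apply]
    have hbc : blockCombine blk ((j:ℕ)+1) xx yy i
        = if (blk i:ℕ)+1 ≤ (j:ℕ)+1 then xx i else yy i := rfl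
    rw [hbc]
    rcases le_or_gt ((blk i:ℕ)+1) ((j:ℕ)+1) with h|h
    · rw [if_pos h, if_neg (by omega)]; ring
    · rw [if_neg (by omega), if_pos (by omega)]
  have hterm : ∀ j : Fin m, ‖blockMask blk j (gradient f xx - pp)‖^2
      ≤ quadForm (keepGE blk ((j:ℕ)+2) (Q j)) (xx - yy) := by
    intro j
    rw [blockMask_sub, hp j]
    calc ‖blockMask blk j (gradient f xx)
          - blockMask blk j (gradient f (blockCombine blk ((j:ℕ)+1) xx yy))‖^2
        ≤ quadForm (Q j) (xx - blockCombine blk ((j:ℕ)+1) xx yy) := hflip j xx _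
      _ = quadForm (Q j) (mGE blk ((j:ℕ)+2) (xx-yy)) := by rw [hsub j]
      _ = quadForm (keepGE blk ((j:ℕ)+2) (Q j)) (xx-yy) := (quadForm_keepGE _ _ _).symm
  calc ‖gradient f xx - pp‖^2
      = ∑ j, ‖blockMask blk j (gradient f xx - pp)‖^2 :=
        (sum_normsq_blockMask (gradient f xx - pp)).symm
    _ ≤ ∑ j : Fin m, quadForm (keepGE blk ((j:ℕ)+2) (Q j)) (xx-yy) :=
        Finset.sum_le_sum (fun j _ => hterm j)
    _ ≤ quadForm (Qtilde blk Q) (xx-yy) := by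
        rw [Qtilde, quadForm_matrix_sum]
        refine Finset.sum_le_sum fun j _ => ?_
        rw [quadForm_add]
        have h0 : 0 ≤ quadForm (keepGE blk ((j:ℕ)+1) (Q j)) (xx-yy) := by
          rw [quadForm_keepGE]; exact quadForm_nonneg (hpsd j) _
        linarith
    _ ≤ specNorm (Qtilde blk Q) * ‖xx - yy‖^2 := quadForm_le_spec _ _
end AC


set_option maxHeartbeats 1600000 in
theorem stmt6 {d m : ℕ} {blk : Fin d → Fin m} {f g : Euc d → ℝ}
    {gj : Fin m → Euc d → ℝ} {Q : Fin m → Matrix (Fin d) (Fin d) ℝ} {γ : ℝ}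
    (P : ACoder d m blk f g gj Q γ) :
    ∀ (u : Euc d) (k : ℕ), 1 ≤ k →
      P.A k * (f (P.y k) - f (P.x k)) - P.A (k - 1) * (f (P.y (k - 1)) - f (P.x k))
          - P.a k * ⟪P.q k, P.v k - P.x k⟫
          + P.a k * ⟪gradient f (P.x k) - P.q k, P.x k - u⟫
          - (1 + P.A (k - 1) * γ) / 2 * ‖P.v k - P.v (k - 1)‖ ^ 2 ≤
        P.a k * ⟪gradient f (P.x k) - P.p k, P.v k - u⟫
          - P.a (k - 1) * ⟪gradient f (P.x (k - 1)) - P.p (k - 1), P.v (k - 1) - u⟫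
          - (1 + P.A (k - 1) * γ) / 10 * ‖P.v k - P.v (k - 1)‖ ^ 2
          + (1 + P.A (k - 2) * γ) / 10 * ‖P.v (k - 1) - P.v (k - 2)‖ ^ 2 := by
  intro u k hk
  have hAnn : ∀ n, 0 ≤ P.A n := by
    intro n
    induction n with
    | zero => rw [P.hA0]
    | succ n ih =>
      have h1 := P.hA (n+1) (by omega)
      have h2 : n + 1 - 1 = n := by omega
      rw [h2] at h1
      rw [h1]
      have := P.hapos (n+1) (by omega)
      linarith
  have hApos : ∀ n, 1 ≤ n → 0 < P.A n := by
    intro n hn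
    rw [P.hA n hn]
    have := P.hapos n hn
    linarith [hAnn (n-1)]
  have hLpos := P.hLpos
  have hak := P.hapos k hk
  have hAk := hApos k hk
  have hAk1 := hAnn (k-1)
  set L := bigL blk Q with hL
  set gk := gradient f (P.x k) with hgk
  set gk1 := gradient f (P.x (k-1)) with hgk1
  set bb := ‖P.v k - P.v (k-1)‖ with hbb
  set aa := ‖P.v (k-1) - P.v (k-2)‖ with haa
  set C := 1 + P.A (k-1) * γ with hC
  set C' := 1 + P.A (k-2) * γ with hC'
  have hC1 : 1 ≤ C := by
    have := mul_nonneg (hAnn (k-1)) P.hγ; rw [hC]; linarith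
  have hC'1 : 1 ≤ C' := by
    have := mul_nonneg (hAnn (k-2)) P.hγ; rw [hC']; linarith
  have hC'le : C' ≤ C := by
    rcases eq_or_lt_of_le hk with h1 | h2
    · have he : k - 1 = k - 2 := by omega
      rw [hC, hC', he]
    · have h3 : 1 ≤ k - 1 := by omega
      have h4 := P.hA (k-1) h3
      have h5 : k - 1 - 1 = k - 2 := by omega
      rw [h5] at h4
      have h6 := P.hapos (k-1) h3
      have h7 := P.hγ
      rw [hC, hC', h4]
      nlinarith
  have hE1 : P.y k - P.x k = (P.a k / P.A k) • (P.v k - P.v (k-1)) := by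
    rw [P.hy k hk, P.hx k hk]; module
  have hxk : P.A k • P.x k = P.A (k-1) • P.y (k-1) + P.a k • P.v (k-1) := by
    rw [P.hx k hk, smul_add, smul_smul, smul_smul,
      mul_div_cancel₀ _ (ne_of_gt hAk), mul_div_cancel₀ _ (ne_of_gt hAk)]
  have hE2 : P.A (k-1) • (P.x k - P.y (k-1)) = P.a k • (P.v (k-1) - P.x k) := by
    have h6 := P.hA k hk
    have h7 : P.A (k-1) • P.x k + P.a k • P.x k = P.A (k-1) • P.y (k-1) + P.a k • P.v (k-1) := by
      rw [← add_smul, ← h6, hxk]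
    rw [smul_sub, smul_sub, sub_eq_sub_iff_add_eq_add, h7]
    abel
  have hcvx := AC.convex_grad P.hfconv P.hfdiff (P.x k) (P.y (k-1))
  have hF1 : P.A (k-1) * (f (P.x k) - f (P.y (k-1))) ≤ P.a k * ⟪gk, P.v (k-1) - P.x k⟫ := by
    have h9 : f (P.x k) - f (P.y (k-1)) ≤ ⟪gk, P.x k - P.y (k-1)⟫ := by
      have h10 : ⟪gk, P.y (k-1) - P.x k⟫ = -⟪gk, P.x k - P.y (k-1)⟫ := by
        rw [← inner_neg_right]; congr 1; abel
      rw [h10] at hcvx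
      linarith
    have h11 := mul_le_mul_of_nonneg_left h9 hAk1
    have h12 : P.A (k-1) * ⟪gk, P.x k - P.y (k-1)⟫ = P.a k * ⟪gk, P.v (k-1) - P.x k⟫ := by
      rw [← real_inner_smul_right, ← real_inner_smul_right, hE2]
    linarith
  have hsm := AC.smooth P.hpsd P.hfconv P.hfdiff P.hflip (P.x k) (P.y k - P.x k)
  have hyx : P.x k + (P.y k - P.x k) = P.y k := by abel
  rw [hyx] at hsm
  rw [hE1, real_inner_smul_right, norm_smul, Real.norm_eq_abs,
    abs_of_nonneg (by positivity), mul_pow] at hsm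
  have hstepk := P.hstep k hk
  have hLne : L ≠ 0 := ne_of_gt hLpos
  have hT2 : L/2 * (P.a k^2 / P.A k) ≤ C/5 := by
    have h13 : P.a k^2/P.A k ≤ 2*C/(5*L) := hstepk
    have h14 := mul_le_mul_of_nonneg_left h13 (by linarith : (0:ℝ) ≤ L/2)
    have h15 : L/2*(2*C/(5*L)) = C/5 := by
      field_simp
    linarith
  have hF2 : P.A k * (f (P.y k) - f (P.x k)) ≤ P.a k * ⟪gk, P.v k - P.v (k-1)⟫ + C/5 * bb^2 := by
    have h15 : f (P.y k) - f (P.x k) ≤ (P.a k/P.A k) * ⟪gk, P.v k - P.v (k-1)⟫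
        + L/2*((P.a k/P.A k)^2*bb^2) := by
      have : L / 2 * ((P.a k / P.A k)^2 * bb^2) = L/2*((P.a k/P.A k)^2*bb^2) := rfl
      linarith [hsm]
    have h16 := mul_le_mul_of_nonneg_left h15 (le_of_lt hAk)
    have e3 : P.A k * ((P.a k/P.A k) * ⟪gk, P.v k - P.v (k-1)⟫)
        = P.a k * ⟪gk, P.v k - P.v (k-1)⟫ := by
      field_simp
    have e4 : P.A k * (L/2*((P.a k/P.A k)^2*bb^2)) = L/2*(P.a k^2/P.A k)*bb^2 := by
      field_simp
    have h17 := mul_le_mul_of_nonneg_right hT2 (sq_nonneg bb)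
    rw [mul_add, e3, e4] at h16
    linarith
  have hH3 : -(P.a (k-1) * ⟪gk1 - P.p (k-1), P.v k - P.v (k-1)⟫)
      ≤ C/5 * bb^2 + C'/10 * aa^2 := by
    rcases Nat.lt_or_ge k 2 with hk1 | hk2
    · have hk1' : k - 1 = 0 := by omega
      have ha0 : P.a (k-1) = 0 := by rw [hk1']; exact P.ha0
      rw [ha0]
      have hb0 : 0 ≤ C/5 * bb^2 := mul_nonneg (by linarith) (sq_nonneg bb)
      have ha0' : 0 ≤ C'/10 * aa^2 := mul_nonneg (by linarith) (sq_nonneg aa)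
      simp only [zero_mul, neg_zero]
      linarith
    · have hk1' : 1 ≤ k - 1 := by omega
      have hkk : k - 1 - 1 = k - 2 := by omega
      have hak1 := P.hapos (k-1) hk1'
      have hAk1p := hApos (k-1) hk1'
      have hE1' : P.y (k-1) - P.x (k-1) = (P.a (k-1)/P.A (k-1)) • (P.v (k-1) - P.v (k-2)) := by
        rw [P.hy (k-1) hk1', P.hx (k-1) hk1', hkk]; module
      have hδ := AC.delta_bound P.hpsd P.hflip (P.x (k-1)) (P.y (k-1)) (P.p (k-1))
        (P.hp (k-1) hk1')
      have hxy : ‖P.x (k-1) - P.y (k-1)‖ = (P.a (k-1)/P.A (k-1)) * aa := by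
        rw [← norm_neg]
        have hneg : -(P.x (k-1) - P.y (k-1)) = P.y (k-1) - P.x (k-1) := by abel
        rw [hneg, hE1', norm_smul, Real.norm_eq_abs, abs_of_nonneg (by positivity)]
      have hspecnn : 0 ≤ specNorm (Qtilde blk Q) := norm_nonneg _
      have hL2 : L^2 = 2 * specNorm (Qtilde blk Q) := Real.sq_sqrt (by linarith)
      set D := ‖gk1 - P.p (k-1)‖ with hD
      have hD2 : D^2 ≤ L^2/2 * ((P.a (k-1)/P.A (k-1))^2 * aa^2) := by
        rw [hxy] at hδ
        calc D^2 ≤ specNorm (Qtilde blk Q) * ((P.a (k-1)/P.A (k-1))*aa)^2 := hδ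
          _ = (2*specNorm (Qtilde blk Q))/2 * ((P.a (k-1)/P.A (k-1))^2*aa^2) := by ring
          _ = L^2/2 * ((P.a (k-1)/P.A (k-1))^2 * aa^2) := by rw [hL2]
      have hinn : -⟪gk1 - P.p (k-1), P.v k - P.v (k-1)⟫ ≤ D * bb := by
        have habs := abs_real_inner_le_norm (gk1 - P.p (k-1)) (P.v k - P.v (k-1))
        have := neg_abs_le ⟪gk1 - P.p (k-1), P.v k - P.v (k-1)⟫
        rw [hD, hbb]
        linarith
      have hstep1 := P.hstep (k-1) hk1'
      rw [hkk] at hstep1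
      set E := P.a (k-1) * D with hE
      have hEnn : 0 ≤ E := mul_nonneg (le_of_lt hak1) (norm_nonneg _)
      have hE2' : E^2 ≤ 2/25 * C'^2 * aa^2 := by
        have hs' : P.a (k-1)^2/P.A (k-1) ≤ 2*C'/(5*L) := hstep1
        have hs'nn : 0 ≤ P.a (k-1)^2/P.A (k-1) := by positivity
        have hsq := mul_self_le_mul_self hs'nn hs'
        have e5 : P.a (k-1)^2 * ((P.a (k-1)/P.A (k-1))^2) = (P.a (k-1)^2/P.A (k-1))^2 := by
          field_simp
        calc E^2 = P.a (k-1)^2 * D^2 := by rw [hE]; ring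
          _ ≤ P.a (k-1)^2 * (L^2/2 * ((P.a (k-1)/P.A (k-1))^2 * aa^2)) :=
              mul_le_mul_of_nonneg_left hD2 (sq_nonneg _)
          _ = L^2/2 * ((P.a (k-1)^2/P.A (k-1))^2 * aa^2) := by rw [← e5]; ring
          _ ≤ L^2/2 * ((2*C'/(5*L))^2 * aa^2) := by
              refine mul_le_mul_of_nonneg_left ?_ (by positivity)
              refine mul_le_mul_of_nonneg_right ?_ (sq_nonneg aa)
              nlinarith [hsq]
          _ = 2/25 * C'^2 * aa^2 := by
              have h5L : (5*L) ≠ 0 := by positivity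
              have hmul : (2*C'/(5*L))^2 * (5*L)^2 = (2*C')^2 := by
                rw [div_pow]
                exact div_mul_cancel₀ _ (pow_ne_zero 2 h5L)
              linear_combination (aa^2/50) * hmul
      have hEb : E * bb ≤ C/5 * bb^2 + C'/10 * aa^2 :=
        AC.young C C' E bb aa hC'1 hC'le hEnn hE2'
      have h18 : -(P.a (k-1) * ⟪gk1 - P.p (k-1), P.v k - P.v (k-1)⟫) ≤ E * bb := by
        have h19 := mul_le_mul_of_nonneg_left hinn (le_of_lt hak1)
        calc -(P.a (k-1) * ⟪gk1 - P.p (k-1), P.v k - P.v (k-1)⟫)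
            = P.a (k-1) * (-⟪gk1 - P.p (k-1), P.v k - P.v (k-1)⟫) := by ring
          _ ≤ P.a (k-1) * (D * bb) := h19
          _ = E * bb := by rw [hE]; ring
      linarith
  have hq' := P.hq k hk
  have hqid : -(P.a k * ⟪P.q k, P.v k - P.x k⟫) + P.a k * ⟪gk - P.q k, P.x k - u⟫
      = -(P.a k * ⟪gk, P.v k - P.x k⟫) + P.a k * ⟪gk - P.p k, P.v k - u⟫
        - P.a (k-1) * ⟪gk1 - P.p (k-1), P.v k - u⟫ := by
    rw [hq']
    simp only [inner_sub_left, inner_add_left, real_inner_smul_left, inner_sub_right]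
    field_simp
    ring
  have hsplit3 : ⟪gk1 - P.p (k-1), P.v k - u⟫
      = ⟪gk1 - P.p (k-1), P.v (k-1) - u⟫ + ⟪gk1 - P.p (k-1), P.v k - P.v (k-1)⟫ := by
    rw [← inner_add_right]; congr 1; abel
  have hsplit1 : ⟪gk, P.v k - P.x k⟫
      = ⟪gk, P.v k - P.v (k-1)⟫ + ⟪gk, P.v (k-1) - P.x k⟫ := by
    rw [← inner_add_right]; congr 1; abel
  have hsplit3' : P.a (k-1) * ⟪gk1 - P.p (k-1), P.v k - u⟫
      = P.a (k-1) * ⟪gk1 - P.p (k-1), P.v (k-1) - u⟫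
        + P.a (k-1) * ⟪gk1 - P.p (k-1), P.v k - P.v (k-1)⟫ := by
    rw [hsplit3]; ring
  have hsplit1' : P.a k * ⟪gk, P.v k - P.x k⟫
      = P.a k * ⟪gk, P.v k - P.v (k-1)⟫ + P.a k * ⟪gk, P.v (k-1) - P.x k⟫ := by
    rw [hsplit1]; ring
  linarith [hF1, hF2, hH3, hqid, hsplit3', hsplit1']
end
end
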